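/- arXiv:1904.10435 — 5 statements merged into one kernel-verified Lean document; each statement's English description precedes it below -/
import Mathlib

section
/- (Error–residual equivalence) Let Ω = (a,b), β ≠ 0 constant, f ∈ L²(Ω), and let u ∈ L²(Ω) be the ultra-weak solution, i.e. -∫_Ω u (β v') = ∫_Ω f v for all v ∈ H₊(Ω). For arbitrary u_h ∈ L²(Ω) define the residual functional R(u_h) on H₊(Ω) by ⟨R(u_h), v⟩ = ∫_Ω f v + ∫_Ω u_h (β v'). Then ‖u - u_h‖_{L²(Ω)} = sup over v ∈ H₊(Ω), v ≠ 0, of ⟨R(u_h), v⟩ / ‖β v'‖_{L²(Ω)}. -/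
open MeasureTheory Set intervalIntegral
open scoped ENNReal

/-- The `L²` norm of `f` over the set `s ⊆ ℝ`. -/
noncomputable def L2N (f : ℝ → ℝ) (s : Set ℝ) : ℝ :=
  (eLpNorm f 2 (volume.restrict s)).toReal

/-- `v` belongs to `H¹(a,b)` with weak derivative `v'` : the derivative is
square-integrable (hence integrable) on `(a,b)` and `v` is the primitive of `v'`
(continuous representative). -/
def IsH1 (a b : ℝ) (v v' : ℝ → ℝ) : Prop :=
  MemLp v' 2 (volume.restrict (Ioo a b)) ∧
  IntervalIntegrable v' volume a b ∧
  ∀ x ∈ Icc a b, v x = v a + ∫ t in a..x, v' t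

private lemma ae_zero_of_primitive_zero {a b : ℝ} {g : ℝ → ℝ}
    (hg : IntegrableOn g (Ioc a b))
    (h : ∀ x ∈ Icc a b, (∫ t in a..x, g t) = 0) :
    g =ᵐ[volume.restrict (Ioc a b)] 0 := by
  set μ := volume.restrict (Ioc a b) with hμ
  have hgi : Integrable g μ := hg
  have hii : ∀ x ∈ Icc a b, IntervalIntegrable g volume a x := fun x hx =>
    (intervalIntegrable_iff_integrableOn_Ioc_of_le hx.1).mpr
      (hg.mono_set (Ioc_subset_Ioc_right hx.2))
  have key : ∀ c d : ℝ, (∫ t in Ioc c d, g t ∂μ) = 0 := by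
    intro c d
    rw [hμ, Measure.restrict_restrict measurableSet_Ioc, Ioc_inter_Ioc]
    rcases le_or_gt (d ⊓ b) (c ⊔ a) with hcd | hcd
    · rw [Ioc_eq_empty (not_lt.mpr hcd)]; simp
    · have hx : c ⊔ a ∈ Icc a b := ⟨le_sup_right, (le_of_lt hcd).trans inf_le_right⟩
      have hy : d ⊓ b ∈ Icc a b := ⟨hx.1.trans hcd.le, inf_le_right⟩
      rw [← intervalIntegral.integral_of_le hcd.le,
        ← intervalIntegral.integral_interval_sub_left (hii _ hy) (hii _ hx),
        h _ hy, h _ hx, sub_zero]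
  set ν₁ := μ.withDensity (fun x => ENNReal.ofReal (g x)) with hν₁
  set ν₂ := μ.withDensity (fun x => ENNReal.ofReal (-g x)) with hν₂
  haveI : IsFiniteMeasure ν₁ := isFiniteMeasure_withDensity_ofReal hgi.2
  haveI : IsFiniteMeasure ν₂ := isFiniteMeasure_withDensity_ofReal hgi.neg.2
  have hνeq : ν₁ = ν₂ := by
    refine Measure.ext_of_Ioc ν₁ ν₂ fun c d hcd => ?_
    have h0 := key c d
    rw [integral_eq_lintegral_pos_part_sub_lintegral_neg_part hgi.restrict] at h0
    have e1 : ν₁ (Ioc c d) = ∫⁻ x in Ioc c d, ENNReal.ofReal (g x) ∂μ :=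
      withDensity_apply _ measurableSet_Ioc
    have e2 : ν₂ (Ioc c d) = ∫⁻ x in Ioc c d, ENNReal.ofReal (-g x) ∂μ :=
      withDensity_apply _ measurableSet_Ioc
    rw [e1, e2]
    have f1 : (∫⁻ x in Ioc c d, ENNReal.ofReal (g x) ∂μ) ≠ ∞ :=
      (e1 ▸ measure_lt_top ν₁ (Ioc c d)).ne
    have f2 : (∫⁻ x in Ioc c d, ENNReal.ofReal (-g x) ∂μ) ≠ ∞ :=
      (e2 ▸ measure_lt_top ν₂ (Ioc c d)).ne
    exact (ENNReal.toReal_eq_toReal_iff' f1 f2).mp (sub_eq_zero.mp h0)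
  refine hgi.ae_eq_zero_of_forall_setIntegral_eq_zero fun s hs _ => ?_
  rw [integral_eq_lintegral_pos_part_sub_lintegral_neg_part hgi.restrict,
    ← withDensity_apply _ hs, ← withDensity_apply _ hs, ← hν₁, ← hν₂, hνeq, sub_self]

private lemma inner_toLp_eq {μ : Measure ℝ} {φ ψ : ℝ → ℝ} (hφ : MemLp φ 2 μ)
    (hψ : MemLp ψ 2 μ) :
    (∫ x, φ x * ψ x ∂μ) = @inner ℝ _ _ (hφ.toLp φ) (hψ.toLp ψ) := by
  rw [L2.inner_def]
  refine integral_congr_ae ?_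
  filter_upwards [hφ.coeFn_toLp, hψ.coeFn_toLp] with x h1 h2
  simp [h1, h2, RCLike.inner_apply, mul_comm]

private lemma integral_mul_le_L2 {μ : Measure ℝ} {φ ψ : ℝ → ℝ} (hφ : MemLp φ 2 μ)
    (hψ : MemLp ψ 2 μ) :
    (∫ x, φ x * ψ x ∂μ) ≤ (eLpNorm φ 2 μ).toReal * (eLpNorm ψ 2 μ).toReal := by
  rw [inner_toLp_eq hφ hψ]
  calc _ ≤ ‖hφ.toLp φ‖ * ‖hψ.toLp ψ‖ := real_inner_le_norm _ _
  _ = _ := by rw [Lp.norm_toLp _ hφ, Lp.norm_toLp _ hψ]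

private lemma integral_self_L2 {μ : Measure ℝ} {φ : ℝ → ℝ} (hφ : MemLp φ 2 μ) :
    (∫ x, φ x * φ x ∂μ) = (eLpNorm φ 2 μ).toReal * (eLpNorm φ 2 μ).toReal := by
  rw [inner_toLp_eq hφ hφ, real_inner_self_eq_norm_mul_norm, Lp.norm_toLp _ hφ]

/-- error–residual equivalence. If `u` is the ultra-weak solution
(`-∫ u (β v') = ∫ f v` for all `v ∈ H₊(Ω)`), then for any `u_h ∈ L²(Ω)` the
`L²` norm of the error `u - u_h` equals the supremum over nonzero `v ∈ H₊(Ω)`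
of `⟨R(u_h), v⟩ / ‖β v'‖`, where `⟨R(u_h), v⟩ = ∫ f v + ∫ u_h (β v')`. -/
theorem error_residual_equivalence (a b β : ℝ) (hab : a < b) (hβ : β ≠ 0)
    (f u uh : ℝ → ℝ)
    (hf : MemLp f 2 (volume.restrict (Ioo a b)))
    (hu : MemLp u 2 (volume.restrict (Ioo a b)))
    (huh : MemLp uh 2 (volume.restrict (Ioo a b)))
    (hweak : ∀ v v' : ℝ → ℝ, IsH1 a b v v' → v (if 0 < β then b else a) = 0 →
      -(∫ x in a..b, u x * (β * v' x)) = ∫ x in a..b, f x * v x) :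
    IsLUB {r : ℝ | ∃ v v' : ℝ → ℝ, IsH1 a b v v' ∧
        v (if 0 < β then b else a) = 0 ∧ ¬ Set.EqOn v 0 (Icc a b) ∧
        r = ((∫ x in a..b, f x * v x) + ∫ x in a..b, uh x * (β * v' x)) /
            L2N (fun x => β * v' x) (Ioo a b)}
      (L2N (fun x => u x - uh x) (Ioo a b)) := by
  set μ := volume.restrict (Ioo a b) with hμdef
  haveI : IsFiniteMeasure μ := ⟨by rw [Measure.restrict_apply_univ]; exact measure_Ioo_lt_top⟩
  set w : ℝ → ℝ := fun x => uh x - u x with hwdef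
  have hw : MemLp w 2 μ := huh.sub hu
  have hNt : L2N (fun x => u x - uh x) (Ioo a b) = L2N w (Ioo a b) := by
    unfold L2N
    congr 1
    have h1 : (fun x => u x - uh x) = -w := by funext x; simp [hwdef]
    rw [h1, eLpNorm_neg]
  have hNnn : (0:ℝ) ≤ L2N w (Ioo a b) := ENNReal.toReal_nonneg
  have hIcc : ∀ h : ℝ → ℝ, (∫ x in a..b, h x) = ∫ x, h x ∂μ := by
    intro h
    rw [intervalIntegral.integral_of_le hab.le, integral_Ioc_eq_integral_Ioo]
  have hmul : ∀ {φ ψ : ℝ → ℝ}, MemLp φ 2 μ → MemLp ψ 2 μ →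
      Integrable (fun x => φ x * ψ x) μ := by
    intro φ ψ hφ hψ
    have h12 : (1:ℝ≥0∞) / 1 = 1 / 2 + 1 / 2 := by
      rw [ENNReal.add_halves, one_div_one]
    have := hψ.smul (r := 1) hφ
    exact memLp_one_iff_integrable.mp this
  have hnum : ∀ v v' : ℝ → ℝ, IsH1 a b v v' → v (if 0 < β then b else a) = 0 →
      (∫ x in a..b, f x * v x) + (∫ x in a..b, uh x * (β * v' x))
        = ∫ x, w x * (β * v' x) ∂μ := by
    intro v v' hH hout
    have hg : MemLp (fun x => β * v' x) 2 μ := hH.1.const_mul β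
    rw [← hweak v v' hH hout, hIcc (fun x => u x * (β * v' x)),
      hIcc (fun x => uh x * (β * v' x)), neg_add_eq_sub,
      ← integral_sub (hmul huh hg) (hmul hu hg)]
    refine integral_congr_ae (Filter.Eventually.of_forall fun x => ?_)
    show uh x * (β * v' x) - u x * (β * v' x) = (uh x - u x) * (β * v' x)
    ring
  constructor
  · rintro r ⟨v, v', hH, hout, hne, rfl⟩
    rw [hNt]
    have hg : MemLp (fun x => β * v' x) 2 μ := hH.1.const_mul β
    have hnum' := hnum v v' hH hout
    have hDnn : (0:ℝ) ≤ L2N (fun x => β * v' x) (Ioo a b) := by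
      unfold L2N; exact ENNReal.toReal_nonneg
    rcases eq_or_lt_of_le hDnn with hD | hD
    · rw [← hD, div_zero]; exact hNnn
    · rw [div_le_iff₀ hD, hnum']
      exact integral_mul_le_L2 hw hg
  · intro c hc
    rw [hNt]
    rcases eq_or_lt_of_le hNnn with hN0 | hNpos
    · -- zero error: use a linear test function
      set p := if 0 < β then b else a with hp
      have hH : IsH1 a b (fun x => x - p) (fun _ => (1:ℝ)) := by
        refine ⟨memLp_const 1, intervalIntegrable_const, fun x hx => ?_⟩
        simp [intervalIntegral.integral_const]
      have hout : (fun x : ℝ => x - p) (if 0 < β then b else a) = 0 := by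
        show (if 0 < β then b else a) - p = 0
        rw [hp, sub_self]
      have hne : ¬ Set.EqOn (fun x : ℝ => x - p) 0 (Icc a b) := by
        intro hEq
        have ha' : a ∈ Icc a b := left_mem_Icc.mpr hab.le
        have hb' : b ∈ Icc a b := right_mem_Icc.mpr hab.le
        have h1 : a - p = 0 := hEq ha'
        have h2 : b - p = 0 := hEq hb'
        have : a = b := by linarith [sub_eq_zero.mp h1, sub_eq_zero.mp h2]
        exact hab.ne this
      have hwae : w =ᵐ[μ] 0 := by
        have h1 : eLpNorm w 2 μ = 0 := by
          have h2 : (eLpNorm w 2 μ).toReal = 0 := hN0.symm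
          exact (ENNReal.toReal_eq_zero_iff _).mp h2 |>.resolve_right hw.2.ne
        exact (eLpNorm_eq_zero_iff hw.1 two_ne_zero).mp h1
      have hval : (0:ℝ) = ((∫ x in a..b, f x * (fun x => x - p) x) +
          ∫ x in a..b, uh x * (β * (fun _ => (1:ℝ)) x)) /
          L2N (fun x => β * (fun _ => (1:ℝ)) x) (Ioo a b) := by
        rw [hnum _ _ hH hout]
        have : (∫ x, w x * (β * (fun _ => (1:ℝ)) x) ∂μ) = 0 := by
          refine integral_eq_zero_of_ae ?_
          filter_upwards [hwae] with x hx
          simp only [Pi.zero_apply] at hx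
          simp [hx]
        rw [this, zero_div]
      have hmem : (0:ℝ) ∈ {r : ℝ | ∃ v v' : ℝ → ℝ, IsH1 a b v v' ∧
          v (if 0 < β then b else a) = 0 ∧ ¬ Set.EqOn v 0 (Icc a b) ∧
          r = ((∫ x in a..b, f x * v x) + ∫ x in a..b, uh x * (β * v' x)) /
              L2N (fun x => β * v' x) (Ioo a b)} :=
        ⟨fun x => x - p, fun _ => 1, hH, hout, hne, hval⟩
      rw [← hN0]
      exact hc hmem
    · -- positive error: use the optimal test function
      set v' : ℝ → ℝ := fun x => β⁻¹ * w x with hv'def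
      have hv' : MemLp v' 2 μ := hw.const_mul β⁻¹
      have hgw : ∀ x, β * v' x = w x := fun x => by
        show β * (β⁻¹ * w x) = w x
        field_simp
      have hIooInt : IntegrableOn v' (Ioo a b) volume :=
        memLp_one_iff_integrable.mp (hv'.mono_exponent (by norm_num))
      have hIocInt : IntegrableOn v' (Ioc a b) volume :=
        (integrableOn_Ioc_iff_integrableOn_Ioo).mpr hIooInt
      have hint : IntervalIntegrable v' volume a b :=
        (intervalIntegrable_iff_integrableOn_Ioc_of_le hab.le).mpr hIocInt
      set c₀ := if 0 < β then -∫ t in a..b, v' t else 0 with hc₀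
      set v : ℝ → ℝ := fun x => c₀ + ∫ t in a..x, v' t with hvdef
      have hH : IsH1 a b v v' := by
        refine ⟨hv', hint, fun x hx => ?_⟩
        show c₀ + _ = (c₀ + _) + _
        simp
      have hout : v (if 0 < β then b else a) = 0 := by
        by_cases hβpos : 0 < β
        · show c₀ + (∫ t in a..(if 0 < β then b else a), v' t) = 0
          rw [if_pos hβpos, hc₀, if_pos hβpos, neg_add_cancel]
        · show c₀ + (∫ t in a..(if 0 < β then b else a), v' t) = 0
          rw [if_neg hβpos, hc₀, if_neg hβpos, intervalIntegral.integral_same, add_zero]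
      have hne : ¬ Set.EqOn v 0 (Icc a b) := by
        intro hEq
        have hva0 : c₀ = 0 := by
          have := hEq (left_mem_Icc.mpr hab.le)
          simpa [hvdef] using this
        have hprim : ∀ x ∈ Icc a b, (∫ t in a..x, v' t) = 0 := by
          intro x hx
          have := hEq hx
          simp only [hvdef, Pi.zero_apply] at this
          rw [hva0, zero_add] at this
          exact this
        have hae := ae_zero_of_primitive_zero hIocInt hprim
        have hres : μ = volume.restrict (Ioc a b) :=
          Measure.restrict_congr_set Ioo_ae_eq_Ioc
        have hae' : v' =ᵐ[μ] 0 := hres ▸ hae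
        have hwae : w =ᵐ[μ] 0 := by
          filter_upwards [hae'] with x hx
          simp only [Pi.zero_apply] at hx ⊢
          rw [← hgw x, hx, mul_zero]
        have h1 : eLpNorm w 2 μ = 0 := by
          rw [eLpNorm_congr_ae hwae, eLpNorm_zero]
        have : L2N w (Ioo a b) = 0 := by
          unfold L2N
          rw [← hμdef, h1, ENNReal.toReal_zero]
        rw [this] at hNpos
        exact lt_irrefl _ hNpos
      have hgfun : (fun x => β * v' x) = w := funext hgw
      have hD : L2N (fun x => β * v' x) (Ioo a b) = L2N w (Ioo a b) := by rw [hgfun]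
      have hval : L2N w (Ioo a b) =
          ((∫ x in a..b, f x * v x) + ∫ x in a..b, uh x * (β * v' x)) /
          L2N (fun x => β * v' x) (Ioo a b) := by
        rw [hnum v v' hH hout, hD]
        have h2 : (∫ x, w x * (β * v' x) ∂μ) = ∫ x, w x * w x ∂μ := by
          refine integral_congr_ae (Filter.Eventually.of_forall fun x => ?_)
          show w x * (β * v' x) = w x * w x
          rw [hgw x]
        rw [h2, integral_self_L2 hw]
        have hLw : L2N w (Ioo a b) = (eLpNorm w 2 μ).toReal := by
          unfold L2N; rw [← hμdef]
        rw [← hLw, mul_div_assoc, div_self (ne_of_gt hNpos), mul_one]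
      exact hc ⟨v, v', hH, hout, hne, hval⟩
end

section
/- (Stability of the local reconstruction) Let ω = (x₀, x₂) be a patch around vertex x₁ with hat function ψ, β ≠ 0 constant, u_h ∈ L²(ω), f ∈ L²(ω), and k' ≥ 0. Suppose s ∈ ℙ_{k'} on each of (x₀,x₁), (x₁,x₂) with s continuous on ω satisfies ∫_ω β (ψ s)' v_h = ∫_ω (f ψ + β ψ' u_h) v_h for all v_h piecewise polynomial of degree ≤ k' (with the compatibility ∫_ω f ψ + β ψ' u_h = 0 if x₁ is an interior vertex). Then ‖β (ψ s)'‖_{L²(ω)} ≤ ‖f ψ + β ψ' u_h‖_{L²(ω)}. -/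
open MeasureTheory Set intervalIntegral

/-- The hat function of the interior vertex `x₁` of the patch `(x₀,x₂)`. -/
noncomputable def hat1 (x₀ x₁ x₂ t : ℝ) : ℝ :=
  if t ≤ x₁ then (t - x₀) / (x₁ - x₀) else (x₂ - t) / (x₂ - x₁)

/-- The (piecewise constant) derivative of the hat function. -/
noncomputable def hat1D (x₀ x₁ x₂ t : ℝ) : ℝ :=
  if t ≤ x₁ then 1 / (x₁ - x₀) else -(1 / (x₂ - x₁))

/-- `β (ψ s)'` for the continuous piecewise polynomial `s = (s₁, s₂)`. -/
noncomputable def Gfun (x₀ x₁ x₂ β : ℝ) (s₁ s₂ : Polynomial ℝ) (t : ℝ) : ℝ :=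
  β * (hat1D x₀ x₁ x₂ t * (if t ≤ x₁ then s₁ else s₂).eval t
    + hat1 x₀ x₁ x₂ t * (if t ≤ x₁ then s₁ else s₂).derivative.eval t)

/-! ### Auxiliary material -/

lemma degAux (k : ℕ) (s : Polynomial ℝ) (hs : s.degree ≤ (k : WithBot ℕ)) (c d a b : ℝ) :
    (Polynomial.C c * (Polynomial.C d * s
      + (Polynomial.C a * Polynomial.X + Polynomial.C b) * s.derivative)).degree
      ≤ (k : WithBot ℕ) := by
  apply Polynomial.degree_le_of_natDegree_le
  have hsk : s.natDegree ≤ k := Polynomial.natDegree_le_of_degree_le hs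
  refine (Polynomial.natDegree_C_mul_le _ _).trans ?_
  refine (Polynomial.natDegree_add_le _ _).trans ?_
  have h1 : (Polynomial.C d * s).natDegree ≤ k :=
    (Polynomial.natDegree_C_mul_le _ _).trans hsk
  have h2 : ((Polynomial.C a * Polynomial.X + Polynomial.C b) * s.derivative).natDegree ≤ k := by
    by_cases hz : s.derivative = 0
    · simp [hz]
    · have h3 : 1 ≤ s.natDegree := by
        by_contra h
        push_neg at h
        interval_cases h' : s.natDegree
        · obtain ⟨e, rfl⟩ := Polynomial.natDegree_eq_zero.mp h'
          simp at hz
      refine (Polynomial.natDegree_mul_le).trans ?_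
      have := Polynomial.natDegree_linear_le (a := a) (b := b)
      have := Polynomial.natDegree_derivative_le s
      omega
  omega

noncomputable def pOne (x₀ x₁ β : ℝ) (s : Polynomial ℝ) : Polynomial ℝ :=
  Polynomial.C (β / (x₁ - x₀)) * (Polynomial.C 1 * s
    + (Polynomial.C 1 * Polynomial.X + Polynomial.C (-x₀)) * s.derivative)

noncomputable def pTwo (x₁ x₂ β : ℝ) (s : Polynomial ℝ) : Polynomial ℝ :=
  Polynomial.C (β / (x₂ - x₁)) * (Polynomial.C (-1) * s
    + (Polynomial.C (-1) * Polynomial.X + Polynomial.C x₂) * s.derivative)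

noncomputable def Qfun (x₀ x₁ x₂ β : ℝ) (s₁ s₂ : Polynomial ℝ) (t : ℝ) : ℝ :=
  if t ≤ x₁ then (pOne x₀ x₁ β s₁).eval t else (pTwo x₁ x₂ β s₂).eval t

lemma Gfun_eq (x₀ x₁ x₂ β : ℝ) (h01 : x₀ < x₁) (h12 : x₁ < x₂) (s₁ s₂ : Polynomial ℝ) :
    Gfun x₀ x₁ x₂ β s₁ s₂ = Qfun x₀ x₁ x₂ β s₁ s₂ := by
  funext t
  have h1 : x₁ - x₀ ≠ 0 := sub_ne_zero.mpr (ne_of_gt h01)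
  have h2 : x₂ - x₁ ≠ 0 := sub_ne_zero.mpr (ne_of_gt h12)
  unfold Gfun Qfun pOne pTwo hat1 hat1D
  split <;>
    simp only [Polynomial.eval_mul, Polynomial.eval_add, Polynomial.eval_C,
      Polynomial.eval_X, Polynomial.eval_one, Polynomial.eval_neg, div_eq_mul_inv] <;>
    ring

lemma measAux (x₁ : ℝ) (q₁ q₂ : Polynomial ℝ) :
    Measurable (fun t : ℝ => if t ≤ x₁ then q₁.eval t else q₂.eval t) :=
  Measurable.ite (measurableSet_Iic) (q₁.continuous_aeval.measurable)
    (q₂.continuous_aeval.measurable)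

lemma memLpAux (x₁ a b : ℝ) (q₁ q₂ : Polynomial ℝ) :
    MemLp (fun t : ℝ => if t ≤ x₁ then q₁.eval t else q₂.eval t) 2
      (volume.restrict (Ioo a b)) := by
  haveI : IsFiniteMeasure (volume.restrict (Ioo a b)) :=
    ⟨by simp [Real.volume_Ioo]⟩
  obtain ⟨C₁, hC₁⟩ := (isCompact_Icc (a := a) (b := b)).exists_bound_of_continuousOn
    q₁.continuous_aeval.continuousOn
  obtain ⟨C₂, hC₂⟩ := (isCompact_Icc (a := a) (b := b)).exists_bound_of_continuousOn
    q₂.continuous_aeval.continuousOn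
  refine MemLp.of_bound (measAux x₁ q₁ q₂).aestronglyMeasurable (C₁ ⊔ C₂) ?_
  rw [ae_restrict_iff' measurableSet_Ioo]
  filter_upwards with t ht
  have ht' : t ∈ Icc a b := Ioo_subset_Icc_self ht
  split
  · exact (hC₁ t ht').trans le_sup_left
  · exact (hC₂ t ht').trans le_sup_right

lemma measHat (x₀ x₁ x₂ : ℝ) : Measurable (hat1 x₀ x₁ x₂) :=
  Measurable.ite measurableSet_Iic ((measurable_id.sub_const x₀).div_const _)
    ((measurable_const.sub measurable_id).div_const _)

lemma measHatD (x₀ x₁ x₂ : ℝ) : Measurable (hat1D x₀ x₁ x₂) :=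
  Measurable.ite measurableSet_Iic measurable_const measurable_const

lemma memLpF (x₀ x₁ x₂ β : ℝ) (h01 : x₀ < x₁) (h12 : x₁ < x₂) (f uh : ℝ → ℝ)
    (hf : MemLp f 2 (volume.restrict (Ioo x₀ x₂)))
    (huh : MemLp uh 2 (volume.restrict (Ioo x₀ x₂))) :
    MemLp (fun t => f t * hat1 x₀ x₁ x₂ t + β * hat1D x₀ x₁ x₂ t * uh t) 2
      (volume.restrict (Ioo x₀ x₂)) := by
  have hm1 : AEStronglyMeasurable (fun t => f t * hat1 x₀ x₁ x₂ t)
      (volume.restrict (Ioo x₀ x₂)) :=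
    hf.1.mul (measHat x₀ x₁ x₂).aestronglyMeasurable
  have hm2 : AEStronglyMeasurable (fun t => β * hat1D x₀ x₁ x₂ t * uh t)
      (volume.restrict (Ioo x₀ x₂)) :=
    (aestronglyMeasurable_const.mul (measHatD x₀ x₁ x₂).aestronglyMeasurable).mul huh.1
  refine MemLp.add ?_ ?_
  · refine MemLp.of_le_mul (c := 1) hf hm1 ?_
    rw [ae_restrict_iff' measurableSet_Ioo]
    filter_upwards with t ht
    rw [norm_mul, one_mul, mul_comm]
    have hb : ‖hat1 x₀ x₁ x₂ t‖ ≤ 1 := by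
      obtain ⟨ht1, ht2⟩ := ht
      rw [Real.norm_eq_abs, abs_le, hat1]
      split <;> constructor
      · have h1 : (0:ℝ) ≤ (t - x₀) / (x₁ - x₀) := by
          apply div_nonneg <;> linarith
        linarith
      · rw [div_le_one (by linarith)]; linarith
      · have h1 : (0:ℝ) ≤ (x₂ - t) / (x₂ - x₁) := by
          apply div_nonneg <;> linarith
        linarith
      · rw [div_le_one (by linarith)]; linarith
    calc ‖hat1 x₀ x₁ x₂ t‖ * ‖f t‖ ≤ 1 * ‖f t‖ :=
          mul_le_mul_of_nonneg_right hb (norm_nonneg _)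
      _ = ‖f t‖ := one_mul _
  · refine MemLp.of_le_mul (c := |β| * (1/(x₁-x₀) ⊔ 1/(x₂-x₁))) huh hm2 ?_
    rw [ae_restrict_iff' measurableSet_Ioo]
    filter_upwards with t ht
    rw [norm_mul, norm_mul]
    have hb : ‖hat1D x₀ x₁ x₂ t‖ ≤ 1/(x₁-x₀) ⊔ 1/(x₂-x₁) := by
      rw [Real.norm_eq_abs, hat1D]
      split
      · rw [abs_of_pos (div_pos one_pos (by linarith))]; exact le_sup_left
      · rw [abs_neg, abs_of_pos (div_pos one_pos (by linarith))]; exact le_sup_right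
    rw [Real.norm_eq_abs (β)]
    have : |β| * ‖hat1D x₀ x₁ x₂ t‖ ≤ |β| * (1/(x₁-x₀) ⊔ 1/(x₂-x₁)) :=
      mul_le_mul_of_nonneg_left hb (abs_nonneg β)
    exact mul_le_mul_of_nonneg_right this (norm_nonneg _)

/-- stability of the local reconstruction: if the continuous
piecewise polynomial `s` of degree `≤ k'` solves the local problem on the
patch `(x₀,x₂)` then `‖β (ψ s)'‖_{L²(ω)} ≤ ‖f ψ + β ψ' u_h‖_{L²(ω)}`. -/
theorem local_reconstruction_stability (x₀ x₁ x₂ β : ℝ) (h01 : x₀ < x₁)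
    (h12 : x₁ < x₂) (hβ : β ≠ 0) (k' : ℕ) (f uh : ℝ → ℝ)
    (hf : MemLp f 2 (volume.restrict (Ioo x₀ x₂)))
    (huh : MemLp uh 2 (volume.restrict (Ioo x₀ x₂)))
    (s₁ s₂ : Polynomial ℝ)
    (hd1 : s₁.degree ≤ (k' : WithBot ℕ)) (hd2 : s₂.degree ≤ (k' : WithBot ℕ))
    (hcont : s₁.eval x₁ = s₂.eval x₁)
    (hcompat : (∫ t in x₀..x₂,
      (f t * hat1 x₀ x₁ x₂ t + β * hat1D x₀ x₁ x₂ t * uh t)) = 0)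
    (hlocal : ∀ v₁ v₂ : Polynomial ℝ,
      v₁.degree ≤ (k' : WithBot ℕ) → v₂.degree ≤ (k' : WithBot ℕ) →
      (∫ t in x₀..x₁, Gfun x₀ x₁ x₂ β s₁ s₂ t * v₁.eval t)
        + (∫ t in x₁..x₂, Gfun x₀ x₁ x₂ β s₁ s₂ t * v₂.eval t)
      = (∫ t in x₀..x₁,
          (f t * hat1 x₀ x₁ x₂ t + β * hat1D x₀ x₁ x₂ t * uh t) * v₁.eval t)
        + ∫ t in x₁..x₂,
            (f t * hat1 x₀ x₁ x₂ t + β * hat1D x₀ x₁ x₂ t * uh t) * v₂.eval t) :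
    L2N (Gfun x₀ x₁ x₂ β s₁ s₂) (Ioo x₀ x₂) ≤
      L2N (fun t => f t * hat1 x₀ x₁ x₂ t + β * hat1D x₀ x₁ x₂ t * uh t)
        (Ioo x₀ x₂) := by
  set μ := volume.restrict (Ioo x₀ x₂) with hμ
  set F : ℝ → ℝ := fun t => f t * hat1 x₀ x₁ x₂ t + β * hat1D x₀ x₁ x₂ t * uh t with hF
  set Q : ℝ → ℝ := Qfun x₀ x₁ x₂ β s₁ s₂ with hQ
  have hGQ : Gfun x₀ x₁ x₂ β s₁ s₂ = Q := Gfun_eq x₀ x₁ x₂ β h01 h12 s₁ s₂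
  have hQle : ∀ t, t ≤ x₁ → Q t = (pOne x₀ x₁ β s₁).eval t := by
    intro t ht; simp [hQ, Qfun, ht]
  have hQgt : ∀ t, x₁ < t → Q t = (pTwo x₁ x₂ β s₂).eval t := by
    intro t ht; simp [hQ, Qfun, not_le.mpr ht]
  -- MemLp facts
  have hQ2 : MemLp Q 2 μ := memLpAux x₁ x₀ x₂ _ _
  have hF2 : MemLp F 2 μ := memLpF x₀ x₁ x₂ β h01 h12 f uh hf huh
  have hhalf : (1 : ENNReal) / 1 = 1 / 2 + 1 / 2 := by
    simp only [one_div, inv_one]; rw [ENNReal.inv_two_add_inv_two]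
  have hQQ : Integrable (fun t => Q t * Q t) μ := by
    have := (hQ2.smul hQ2 (hpqr := ⟨by rw [inv_one, ENNReal.inv_two_add_inv_two]⟩) : MemLp (Q • Q) 1 μ)
    exact memLp_one_iff_integrable.mp this
  have hFQ : Integrable (fun t => F t * Q t) μ := by
    have := (hF2.smul hQ2 (hpqr := ⟨by rw [inv_one, ENNReal.inv_two_add_inv_two]⟩) : MemLp (Q • F) 1 μ)
    have h := memLp_one_iff_integrable.mp this
    exact h.congr (Filter.Eventually.of_forall fun t => by
      simp [Pi.smul_apply, smul_eq_mul, mul_comm])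
  -- the key integral identity
  have hsub1 : Ioc x₀ x₁ ⊆ Ioo x₀ x₂ := fun t ht => ⟨ht.1, lt_of_le_of_lt ht.2 h12⟩
  have hsub2 : Ioo x₁ x₂ ⊆ Ioo x₀ x₂ := fun t ht => ⟨lt_trans h01 ht.1, ht.2⟩
  have hdisj : Disjoint (Ioc x₀ x₁) (Ioo x₁ x₂) := by
    rw [Set.disjoint_left]
    rintro a ⟨_, ha⟩ ⟨hb, _⟩
    exact absurd hb (not_lt.mpr ha)
  have hsplit : ∀ g : ℝ → ℝ, Integrable g μ →
      (∫ t in Ioc x₀ x₁, g t) + (∫ t in Ioo x₁ x₂, g t) = ∫ t in Ioo x₀ x₂, g t := by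
    intro g hg
    have hg' : IntegrableOn g (Ioo x₀ x₂) volume := hg
    rw [← setIntegral_union hdisj measurableSet_Ioo (hg'.mono_set hsub1) (hg'.mono_set hsub2),
      Ioc_union_Ioo_eq_Ioo h01.le h12]
  have I := hlocal (pOne x₀ x₁ β s₁) (pTwo x₁ x₂ β s₂)
    (degAux k' s₁ hd1 _ 1 1 (-x₀)) (degAux k' s₂ hd2 _ (-1) (-1) x₂)
  rw [intervalIntegral.integral_of_le h01.le, intervalIntegral.integral_of_le h12.le,
    intervalIntegral.integral_of_le h01.le, intervalIntegral.integral_of_le h12.le] at I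
  have e1 : (∫ t in Ioc x₀ x₁, Gfun x₀ x₁ x₂ β s₁ s₂ t * (pOne x₀ x₁ β s₁).eval t)
      = ∫ t in Ioc x₀ x₁, Q t * Q t := by
    refine setIntegral_congr_fun measurableSet_Ioc fun t ht => ?_
    rw [hGQ, hQle t ht.2]
  have e2 : (∫ t in Ioc x₁ x₂, Gfun x₀ x₁ x₂ β s₁ s₂ t * (pTwo x₁ x₂ β s₂).eval t)
      = ∫ t in Ioo x₁ x₂, Q t * Q t := by
    rw [integral_Ioc_eq_integral_Ioo]
    refine setIntegral_congr_fun measurableSet_Ioo fun t ht => ?_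
    rw [hGQ, hQgt t ht.1]
  have e3 : (∫ t in Ioc x₀ x₁, F t * (pOne x₀ x₁ β s₁).eval t)
      = ∫ t in Ioc x₀ x₁, F t * Q t := by
    refine setIntegral_congr_fun measurableSet_Ioc fun t ht => ?_
    rw [hQle t ht.2]
  have e4 : (∫ t in Ioc x₁ x₂, F t * (pTwo x₁ x₂ β s₂).eval t)
      = ∫ t in Ioo x₁ x₂, F t * Q t := by
    rw [integral_Ioc_eq_integral_Ioo]
    refine setIntegral_congr_fun measurableSet_Ioo fun t ht => ?_
    rw [hQgt t ht.1]
  rw [e1, e2, e3, e4, hsplit _ hQQ, hsplit _ hFQ] at I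
  -- Cauchy--Schwarz
  have hnormSq : ∀ y : ℝ, ‖y‖ ^ (2:ℝ) = y * y := by
    intro y
    rw [show (2:ℝ) = ((2:ℕ):ℝ) by norm_num, Real.rpow_natCast, Real.norm_eq_abs, sq_abs, sq]
  have hof2 : ENNReal.ofReal (2:ℝ) = 2 := by simp [zero_le_one]
  have hconj : Real.HolderConjugate 2 2 := by
    constructor <;> norm_num
  have hF2' : MemLp F (ENNReal.ofReal (2:ℝ)) μ := by rw [hof2]; exact hF2
  have hQ2' : MemLp Q (ENNReal.ofReal (2:ℝ)) μ := by rw [hof2]; exact hQ2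
  have holder := MeasureTheory.integral_mul_norm_le_Lp_mul_Lq hconj hF2' hQ2'
  set A : ℝ := ∫ a, ‖Q a‖ ^ (2:ℝ) ∂μ with hA
  set B : ℝ := ∫ a, ‖F a‖ ^ (2:ℝ) ∂μ with hB
  have hA0 : 0 ≤ A := integral_nonneg fun a => Real.rpow_nonneg (norm_nonneg _) _
  have hB0 : 0 ≤ B := integral_nonneg fun a => Real.rpow_nonneg (norm_nonneg _) _
  have hAeq : A = ∫ t in Ioo x₀ x₂, Q t * Q t := by
    rw [hA, hμ]; exact integral_congr_ae (Filter.Eventually.of_forall fun t => hnormSq _)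
  have hkey : A ≤ B ^ (1/2:ℝ) * A ^ (1/2:ℝ) := by
    calc A = ∫ t in Ioo x₀ x₂, F t * Q t := by rw [hAeq, I]
      _ ≤ |∫ t in Ioo x₀ x₂, F t * Q t| := le_abs_self _
      _ ≤ ∫ t in Ioo x₀ x₂, ‖F t * Q t‖ := by
          rw [← Real.norm_eq_abs]; exact norm_integral_le_integral_norm _
      _ = ∫ a, ‖F a‖ * ‖Q a‖ ∂μ := by
          rw [hμ]
          exact integral_congr_ae (Filter.Eventually.of_forall fun t => norm_mul _ _)
      _ ≤ B ^ (1/2:ℝ) * A ^ (1/2:ℝ) := holder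
  -- conclude
  rw [L2N, L2N, hGQ, ← hμ,
    hQ2.eLpNorm_eq_integral_rpow_norm two_ne_zero ENNReal.ofNat_ne_top,
    hF2.eLpNorm_eq_integral_rpow_norm two_ne_zero ENNReal.ofNat_ne_top]
  simp only [ENNReal.toReal_ofNat]
  rw [ENNReal.toReal_ofReal (Real.rpow_nonneg hA0 _),
    ENNReal.toReal_ofReal (Real.rpow_nonneg hB0 _)]
  rcases eq_or_lt_of_le hA0 with h | h
  · rw [← h, Real.zero_rpow (by norm_num)]
    exact Real.rpow_nonneg hB0 _
  · have hAA : A ^ (1/2:ℝ) * A ^ (1/2:ℝ) = A := by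
      rw [← Real.rpow_add h]; norm_num
    have h2 : A ^ (1/2:ℝ) * A ^ (1/2:ℝ) ≤ B ^ (1/2:ℝ) * A ^ (1/2:ℝ) := by
      rw [hAA]; exact hkey
    have h3 : A ^ (1/2:ℝ) ≤ B ^ (1/2:ℝ) :=
      le_of_mul_le_mul_right h2 (Real.rpow_pos_of_pos h _)
    have : (2:ℝ)⁻¹ = (1/2:ℝ) := by norm_num
    rw [this]
    exact h3
end

section
/- (Global reconstruction satisfies the inflow boundary condition) With β > 0 on Ω = (a,b) and mesh vertices a = x₀ < … < x_n = b, let s_j ∈ H¹(ω_j) be the patchwise reconstructions of Definition of local problems, i.e., for each vertex x_j, ∫_{ω_j} β(ψ_j s_j)' v_h = ∫_{ω_j}(f ψ_j + β ψ_j' u_h) v_h for all piecewise polynomials v_h of degree ≤ k' on ω_j, where ⟨R(u_h), ψ_j⟩ = ∫ f ψ_j + ∫ u_h β ψ_j' = 0 holds for all interior vertices and the inflow vertex x₀. Then the global function s_h = ∑_j ψ_j s_j lies in H¹(Ω) and satisfies s_h(a) = 0. -/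
open MeasureTheory Set intervalIntegral

/-- Left endpoint of the patch `ω_j` around vertex `x j`. -/
def pl (x : ℕ → ℝ) (j : ℕ) : ℝ := if j = 0 then x 0 else x (j - 1)

/-- Right endpoint of the patch `ω_j` around vertex `x j` (mesh with `n` elements). -/
def pr (x : ℕ → ℝ) (n j : ℕ) : ℝ := if j = n then x n else x (j + 1)

/-- The piecewise affine hat function `ψ_j` of vertex `x j`, extended by zero. -/
noncomputable def hatf (x : ℕ → ℝ) (n j : ℕ) (y : ℝ) : ℝ :=
  if y < pl x j then 0
  else if y ≤ x j then (if j = 0 then 1 else (y - x (j - 1)) / (x j - x (j - 1)))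
  else if y ≤ pr x n j then (if j = n then 1 else (x (j + 1) - y) / (x (j + 1) - x j))
  else 0

/-- The (piecewise constant) derivative of the hat function `ψ_j`. -/
noncomputable def hatD (x : ℕ → ℝ) (n j : ℕ) (y : ℝ) : ℝ :=
  if y < pl x j then 0
  else if y ≤ x j then (if j = 0 then 0 else 1 / (x j - x (j - 1)))
  else if y ≤ pr x n j then (if j = n then 0 else -(1 / (x (j + 1) - x j)))
  else 0

/-- The index of the inflow vertex (`0` for `β > 0`, `n` for `β < 0`). -/
noncomputable def inflowIdx (n : ℕ) (β : ℝ) : ℕ := if 0 < β then 0 else n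

/-- Membership in the local space `V_j` on the patch `ω_j = (pl j, pr j)`:
`v ∈ H¹(ω_j)`, extended by zero outside `ω_j`; `v ∈ H¹₀(ω_j)` if `x j` is not
the inflow vertex, and `v` vanishes at the outflow endpoint of `ω_j` if `x j`
is the inflow vertex. -/
def Vmem (x : ℕ → ℝ) (n : ℕ) (β : ℝ) (j : ℕ) (v v' : ℝ → ℝ) : Prop :=
  IsH1 (pl x j) (pr x n j) v v' ∧
  (∀ y, y ∉ Ioo (pl x j) (pr x n j) → v y = 0) ∧
  (j = inflowIdx n β → v (if 0 < β then pr x n j else pl x j) = 0) ∧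
  (j ≠ inflowIdx n β → v (pl x j) = 0 ∧ v (pr x n j) = 0)

/-- The set of residual quotients over the local space `V_j` (zero extensions). -/
def localQuot (x : ℕ → ℝ) (n : ℕ) (β : ℝ) (R : (ℝ → ℝ) → ℝ) (j : ℕ) : Set ℝ :=
  {t : ℝ | ∃ v v' : ℝ → ℝ, Vmem x n β j v v' ∧
    ¬ Set.EqOn v 0 (Icc (pl x j) (pr x n j)) ∧
    t = R v / L2N (fun y => β * v' y) (Ioo (pl x j) (pr x n j))}

/-- The set of residual quotients over the global space `H₊(Ω)`. -/
def globalQuot (x : ℕ → ℝ) (n : ℕ) (β : ℝ) (R : (ℝ → ℝ) → ℝ) : Set ℝ :=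
  {t : ℝ | ∃ v v' : ℝ → ℝ, IsH1 (x 0) (x n) v v' ∧
    v (if 0 < β then x n else x 0) = 0 ∧ ¬ Set.EqOn v 0 (Icc (x 0) (x n)) ∧
    t = R v / L2N (fun y => β * v' y) (Ioo (x 0) (x n))}

/-- The patchwise reconstruction `s_j`, given by the polynomial pieces
`P j 0` (left piece) and `P j 1` (right piece). -/
noncomputable def sfun (x : ℕ → ℝ) (n : ℕ) (P : ℕ → ℕ → Polynomial ℝ) (j : ℕ) (y : ℝ) : ℝ :=
  if j = 0 then (P 0 1).eval y
  else if j = n then (P n 0).eval y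
  else if y ≤ x j then (P j 0).eval y else (P j 1).eval y

/-- The derivative `(ψ_j s_j)'` on the patch `ω_j`, computed piecewise by the
product rule (`ψ_j` being piecewise affine). -/
noncomputable def Dfun (x : ℕ → ℝ) (n : ℕ) (P : ℕ → ℕ → Polynomial ℝ) (j : ℕ) (y : ℝ) : ℝ :=
  if y ≤ x j then
    (1 / (x j - pl x j)) * (P j 0).eval y
      + ((y - pl x j) / (x j - pl x j)) * (P j 0).derivative.eval y
  else
    -(1 / (pr x n j - x j)) * (P j 1).eval y
      + ((pr x n j - y) / (pr x n j - x j)) * (P j 1).derivative.eval y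


section AuxReconstruction

lemma mesh_mono {n : ℕ} {x : ℕ → ℝ} (hx : ∀ i < n, x i < x (i + 1)) :
    ∀ {i j : ℕ}, i ≤ j → j ≤ n → x i ≤ x j := by
  intro i j hij hjn
  induction j with
  | zero => simp [Nat.le_zero.mp hij]
  | succ k ih =>
    rcases Nat.lt_or_ge i (k + 1) with h | h
    · exact le_trans (ih (by omega) (by omega)) (le_of_lt (hx k (by omega)))
    · have : i = k + 1 := by omega
      simp [this]

lemma mesh_strict {n : ℕ} {x : ℕ → ℝ} (hx : ∀ i < n, x i < x (i + 1)) :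
    ∀ {i j : ℕ}, i < j → j ≤ n → x i < x j := by
  intro i j hij hjn
  have h1 : x i ≤ x (j - 1) := mesh_mono hx (by omega) (by omega)
  have h2 : x (j - 1) < x j := by
    have := hx (j - 1) (by omega)
    have hj : j - 1 + 1 = j := by omega
    rwa [hj] at this
  linarith

lemma pl_le {n : ℕ} {x : ℕ → ℝ} (hx : ∀ i < n, x i < x (i + 1)) {j : ℕ} (hj : j ≤ n) :
    pl x j ≤ x j := by
  unfold pl
  split
  · rename_i h; subst h; exact le_refl _
  · exact le_of_lt (mesh_strict hx (by omega) hj)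

lemma find_elem {n : ℕ} {x : ℕ → ℝ} (hx : ∀ i < n, x i < x (i + 1)) (hn : 1 ≤ n) {y : ℝ}
    (h1 : x 0 ≤ y) (h2 : y ≤ x n) : ∃ i, i < n ∧ x i ≤ y ∧ y ≤ x (i + 1) := by
  induction n with
  | zero => omega
  | succ m ih =>
    rcases Nat.eq_zero_or_pos m with hm | hm
    · subst hm; exact ⟨0, by omega, h1, h2⟩
    · rcases le_or_gt y (x m) with h | h
      · obtain ⟨i, hi, h3, h4⟩ := ih (fun i hi => hx i (by omega)) hm h
        exact ⟨i, by omega, h3, h4⟩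
      · exact ⟨m, by omega, le_of_lt h, h2⟩

lemma hat_right {n : ℕ} {x : ℕ → ℝ} (hx : ∀ i < n, x i < x (i + 1)) {j : ℕ} {y : ℝ}
    (hj : j < n) (h1 : x j ≤ y) (h2 : y ≤ x (j + 1)) :
    hatf x n j y = (x (j + 1) - y) / (x (j + 1) - x j) := by
  have hjn : j ≠ n := by omega
  have hlt : x j < x (j + 1) := hx j hj
  unfold hatf
  rw [if_neg (not_lt.mpr (le_trans (pl_le hx (by omega)) h1))]
  rcases eq_or_lt_of_le h1 with he | hlt2
  · rw [if_pos (le_of_eq he.symm), ← he, div_self (sub_ne_zero.mpr (ne_of_gt hlt))]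
    split
    · rfl
    · rename_i hj0
      have := mesh_strict hx (show j - 1 < j by omega) (by omega)
      rw [div_self (sub_ne_zero.mpr (ne_of_gt this))]
  · rw [if_neg (not_le.mpr hlt2), if_pos (by simp only [pr, if_neg hjn]; exact h2),
      if_neg hjn]

lemma hat_left {n : ℕ} {x : ℕ → ℝ} {j : ℕ} {y : ℝ}
    (hj0 : j ≠ 0) (h1 : x (j - 1) ≤ y) (h2 : y ≤ x j) :
    hatf x n j y = (y - x (j - 1)) / (x j - x (j - 1)) := by
  unfold hatf
  rw [if_neg (by simp only [pl, if_neg hj0]; exact not_lt.mpr h1), if_pos h2, if_neg hj0]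

lemma hat_zero {n : ℕ} {x : ℕ → ℝ} (hx : ∀ i < n, x i < x (i + 1)) {i j : ℕ} {y : ℝ}
    (hi : i < n) (hj : j ≤ n) (hji : j ≠ i) (hji1 : j ≠ i + 1)
    (hy1 : x i ≤ y) (hy2 : y ≤ x (i + 1)) : hatf x n j y = 0 := by
  unfold hatf
  rcases Nat.lt_or_ge j i with h | h
  · have hjn : j ≠ n := by omega
    have h1 : x (j + 1) ≤ x i := mesh_mono hx (by omega) (by omega)
    have h2 : x j < x (j + 1) := hx j (by omega)
    rw [if_neg (not_lt.mpr (le_trans (pl_le hx (by omega)) (by linarith)))]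
    rw [if_neg (by push_neg; linarith)]
    simp only [pr, if_neg hjn]
    split
    · rename_i hle
      have : y = x (j + 1) := le_antisymm hle (by linarith)
      rw [this, sub_self, zero_div]
    · rfl
  · have hj2 : i + 2 ≤ j := by omega
    have hj0 : j ≠ 0 := by omega
    have h1 : x (i + 1) ≤ x (j - 1) := mesh_mono hx (by omega) (by omega)
    simp only [pl, if_neg hj0, pr]
    have hjlt : x (j - 1) < x j := by
      have := hx (j - 1) (by omega)
      have hjj : j - 1 + 1 = j := by omega
      rwa [hjj] at this
    split_ifs with c1 c2 <;> try rfl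
    · have hey : y = x (j - 1) := le_antisymm (by linarith) (not_lt.mp c1)
      rw [hey, sub_self, zero_div]
    all_goals
      exfalso
      push_neg at c1 c2
      linarith

/-- The polynomial to which the global reconstruction restricts on element `i`. -/
noncomputable def Qi (x : ℕ → ℝ) (P : ℕ → ℕ → Polynomial ℝ) (i : ℕ) : Polynomial ℝ :=
  Polynomial.C (1 / (x (i + 1) - x i)) *
    ((Polynomial.C (x (i + 1)) - Polynomial.X) * P i 1
      + (Polynomial.X - Polynomial.C (x i)) * P (i + 1) 0)

/-- The global weak derivative of the reconstruction. -/
noncomputable def dshF (x : ℕ → ℝ) (n : ℕ) (P : ℕ → ℕ → Polynomial ℝ) (y : ℝ) : ℝ :=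
  ∑ i ∈ Finset.range n,
    Set.indicator (Ioc (x i) (x (i + 1))) (fun t => (Qi x P i).derivative.eval t) y

lemma term_left {n : ℕ} {x : ℕ → ℝ} (hx : ∀ i < n, x i < x (i + 1))
    {P : ℕ → ℕ → Polynomial ℝ}
    (hPcont : ∀ j, 0 < j → j < n → (P j 0).eval (x j) = (P j 1).eval (x j))
    {i : ℕ} {y : ℝ} (hi : i < n) (hy1 : x i ≤ y) (hy2 : y ≤ x (i + 1)) :
    hatf x n i y * sfun x n P i y
      = (x (i + 1) - y) / (x (i + 1) - x i) * (P i 1).eval y := by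
  rw [hat_right hx hi hy1 hy2]
  congr 1
  unfold sfun
  rcases Nat.eq_zero_or_pos i with h0 | h0
  · simp [h0]
  · rw [if_neg (by omega), if_neg (by omega)]
    rcases eq_or_lt_of_le hy1 with he | hlt
    · rw [if_pos (le_of_eq he.symm), ← he, hPcont i h0 hi]
    · rw [if_neg (not_le.mpr hlt)]

lemma term_right {n : ℕ} {x : ℕ → ℝ}
    {P : ℕ → ℕ → Polynomial ℝ}
    {i : ℕ} {y : ℝ} (hi : i < n) (hy1 : x i ≤ y) (hy2 : y ≤ x (i + 1)) :
    hatf x n (i + 1) y * sfun x n P (i + 1) y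
      = (y - x i) / (x (i + 1) - x i) * (P (i + 1) 0).eval y := by
  have hl := hat_left (n := n) (x := x) (j := i + 1) (y := y) (by omega)
    (by simpa using hy1) hy2
  simp only [Nat.add_sub_cancel] at hl
  rw [hl]
  congr 1
  unfold sfun
  rw [if_neg (by omega)]
  rcases Nat.eq_or_lt_of_le (show i + 1 ≤ n by omega) with he | hlt
  · rw [if_pos he, he]
  · rw [if_neg (by omega), if_pos hy2]

lemma Sval {n : ℕ} {x : ℕ → ℝ} (hx : ∀ i < n, x i < x (i + 1))
    {P : ℕ → ℕ → Polynomial ℝ}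
    (hPcont : ∀ j, 0 < j → j < n → (P j 0).eval (x j) = (P j 1).eval (x j))
    {i : ℕ} {y : ℝ} (hi : i < n) (hy1 : x i ≤ y) (hy2 : y ≤ x (i + 1)) :
    (∑ j ∈ Finset.range (n + 1), hatf x n j y * sfun x n P j y) = (Qi x P i).eval y := by
  have hsub : ({i, i + 1} : Finset ℕ) ⊆ Finset.range (n + 1) := by
    intro j hj
    simp only [Finset.mem_insert, Finset.mem_singleton] at hj
    rcases hj with h | h <;> simp [Finset.mem_range] <;> omega
  rw [← Finset.sum_subset hsub (fun j hj hj2 => by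
    simp only [Finset.mem_insert, Finset.mem_singleton, not_or] at hj2
    rw [hat_zero hx hi (by simpa [Finset.mem_range, Nat.lt_succ_iff] using hj) hj2.1 hj2.2
      hy1 hy2, zero_mul])]
  rw [Finset.sum_pair (by omega : i ≠ i + 1), term_left hx hPcont hi hy1 hy2,
    term_right hi hy1 hy2]
  simp only [Qi, Polynomial.eval_mul, Polynomial.eval_add, Polynomial.eval_sub,
    Polynomial.eval_C, Polynomial.eval_X]
  ring

lemma dshF_integrable (x : ℕ → ℝ) (n : ℕ) (P : ℕ → ℕ → Polynomial ℝ) :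
    Integrable (dshF x n P) (volume : Measure ℝ) := by
  unfold dshF
  apply integrable_finset_sum
  intro i _
  exact ((Polynomial.continuous _).integrableOn_Ioc).integrable_indicator measurableSet_Ioc

lemma dshF_memL2 {n : ℕ} (x : ℕ → ℝ) (P : ℕ → ℕ → Polynomial ℝ) (a b : ℝ) :
    MemLp (dshF x n P) 2 (volume.restrict (Ioo a b)) := by
  have : IsFiniteMeasure (volume.restrict (Ioo a b)) := by
    constructor
    rw [Measure.restrict_apply_univ, Real.volume_Ioo]
    exact ENNReal.ofReal_lt_top
  unfold dshF
  apply memLp_finset_sum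
  intro i _
  apply MemLp.indicator measurableSet_Ioc
  obtain ⟨C, hC⟩ := (isCompact_Icc (a := a) (b := b)).exists_bound_of_continuousOn
    (Polynomial.continuous ((Qi x P i).derivative)).continuousOn
  apply MemLp.of_bound (Polynomial.continuous _).aestronglyMeasurable C
  filter_upwards [ae_restrict_mem measurableSet_Ioo] with y hy
  exact hC y ⟨le_of_lt hy.1, le_of_lt hy.2⟩

lemma elem_int {n : ℕ} {x : ℕ → ℝ} (hx : ∀ i < n, x i < x (i + 1))
    (P : ℕ → ℕ → Polynomial ℝ) {i : ℕ} (hi : i < n) {y : ℝ}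
    (hy1 : x i ≤ y) (hy2 : y ≤ x (i + 1)) :
    ∫ t in (x i)..y, dshF x n P t = (Qi x P i).eval y - (Qi x P i).eval (x i) := by
  have h1 : ∫ t in (x i)..y, dshF x n P t
      = ∫ t in (x i)..y, (Qi x P i).derivative.eval t := by
    rw [intervalIntegral.integral_of_le hy1, intervalIntegral.integral_of_le hy1]
    apply setIntegral_congr_fun measurableSet_Ioc
    intro t ht
    unfold dshF
    rw [Finset.sum_eq_single i]
    · exact Set.indicator_of_mem
        (show t ∈ Ioc (x i) (x (i + 1)) from ⟨ht.1, le_trans ht.2 hy2⟩) _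
    · intro b hb hbi
      apply Set.indicator_of_notMem
      intro hmem
      rcases Nat.lt_or_ge b i with h | h
      · have h2 : x (b + 1) ≤ x i := mesh_mono hx (by omega) (by omega)
        have := hmem.2
        have := ht.1
        linarith
      · have hbge : i + 1 ≤ b := by omega
        have h2 : x (i + 1) ≤ x b := mesh_mono hx hbge (le_of_lt (Finset.mem_range.mp hb))
        have := hmem.1
        have := ht.2
        linarith
    · intro h
      exact absurd (Finset.mem_range.mpr hi) h
  rw [h1]
  exact intervalIntegral.integral_eq_sub_of_hasDerivAt
    (fun t _ => Polynomial.hasDerivAt (Qi x P i) t)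
    ((Polynomial.continuous _).intervalIntegrable _ _)

end AuxReconstruction

/-- the global reconstruction `s_h = ∑_j ψ_j s_j` built from the
patchwise problems (with hat-orthogonality at the interior and inflow
vertices) lies in `H¹(Ω)` and vanishes at the inflow endpoint `a = x 0`
(case `β > 0`). -/
theorem reconstruction_inflow_bc (n k' : ℕ) (hn : 1 ≤ n) (x : ℕ → ℝ)
    (hx : ∀ i < n, x i < x (i + 1)) (β : ℝ) (hβ : 0 < β) (f uh : ℝ → ℝ)
    (hf : MemLp f 2 (volume.restrict (Ioo (x 0) (x n))))
    (hfint : ∀ i < n, IntervalIntegrable f volume (x i) (x (i + 1)))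
    (huh : MemLp uh 2 (volume.restrict (Ioo (x 0) (x n))))
    (huhint : ∀ i < n, IntervalIntegrable uh volume (x i) (x (i + 1)))
    (P : ℕ → ℕ → Polynomial ℝ)
    (hPdeg : ∀ j i, (P j i).degree ≤ (k' : WithBot ℕ))
    (hPcont : ∀ j, 0 < j → j < n → (P j 0).eval (x j) = (P j 1).eval (x j))
    (hortho : ∀ j ≤ n, j ≠ n →
      (∫ t in pl x j..x j,
          (f t * hatf x n j t + β * (1 / (x j - pl x j)) * uh t))
        + (∫ t in (x j)..(pr x n j),
            (f t * hatf x n j t + β * (-(1 / (pr x n j - x j))) * uh t)) = 0)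
    (hlocal : ∀ j ≤ n, ∀ q₁ q₂ : Polynomial ℝ,
      q₁.degree ≤ (k' : WithBot ℕ) → q₂.degree ≤ (k' : WithBot ℕ) →
      (∫ t in pl x j..x j, β * Dfun x n P j t * q₁.eval t)
        + (∫ t in (x j)..(pr x n j), β * Dfun x n P j t * q₂.eval t)
      = (∫ t in pl x j..x j,
          (f t * hatf x n j t + β * (1 / (x j - pl x j)) * uh t) * q₁.eval t)
        + ∫ t in (x j)..(pr x n j),
            (f t * hatf x n j t + β * (-(1 / (pr x n j - x j))) * uh t) * q₂.eval t) :
    (∃ dsh : ℝ → ℝ, IsH1 (x 0) (x n)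
        (fun y => ∑ j ∈ Finset.range (n + 1), hatf x n j y * sfun x n P j y) dsh)
    ∧ (∑ j ∈ Finset.range (n + 1), hatf x n j (x 0) * sfun x n P j (x 0)) = 0 := by
  have h01 : x 0 < x 1 := hx 0 hn
  have h0n : (0 : ℕ) ≠ n := by omega
  have hpl0 : pl x 0 = x 0 := by simp [pl]
  have hpr0 : pr x n 0 = x 1 := by simp only [pr]; rw [if_neg h0n]
  have hne : x 1 - x 0 ≠ 0 := sub_ne_zero.mpr (ne_of_gt h01)
  -- Step A : the left reconstruction piece vanishes at the inflow vertex
  have hdeg1 : (1 : Polynomial ℝ).degree ≤ (k' : WithBot ℕ) :=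
    le_trans Polynomial.degree_one_le (by exact_mod_cast Nat.zero_le k')
  have horth := hortho 0 (Nat.zero_le n) h0n
  rw [hpl0, intervalIntegral.integral_same, zero_add] at horth
  have hloc := hlocal 0 (Nat.zero_le n) 1 1 hdeg1 hdeg1
  rw [hpl0] at hloc
  simp only [Polynomial.eval_one, mul_one, intervalIntegral.integral_same, zero_add] at hloc
  rw [horth] at hloc
  rw [hpr0] at hloc
  -- hloc : ∫ t in x 0..x 1, β * Dfun x n P 0 t = 0
  set Q0 : Polynomial ℝ :=
    Polynomial.C (β / (x 1 - x 0)) * ((Polynomial.C (x 1) - Polynomial.X) * P 0 1) with hQ0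
  have hQd : ∀ t : ℝ, Q0.derivative.eval t
      = β / (x 1 - x 0) * (-(P 0 1).eval t + (x 1 - t) * (P 0 1).derivative.eval t) := by
    intro t
    simp [hQ0, Polynomial.derivative_mul]
    try ring
  have hcong : ∫ t in (x 0)..(x 1), β * Dfun x n P 0 t
      = ∫ t in (x 0)..(x 1), Q0.derivative.eval t := by
    rw [intervalIntegral.integral_of_le (le_of_lt h01),
      intervalIntegral.integral_of_le (le_of_lt h01)]
    apply setIntegral_congr_fun measurableSet_Ioc
    intro t ht
    dsimp only
    unfold Dfun
    rw [if_neg (not_le.mpr ht.1), hQd t, hpr0]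
    ring
  have hftc : ∫ t in (x 0)..(x 1), Q0.derivative.eval t = Q0.eval (x 1) - Q0.eval (x 0) :=
    intervalIntegral.integral_eq_sub_of_hasDerivAt (fun t _ => Polynomial.hasDerivAt Q0 t)
      ((Polynomial.continuous _).intervalIntegrable _ _)
  have hP0 : (P 0 1).eval (x 0) = 0 := by
    rw [hcong, hftc] at hloc
    simp only [hQ0, Polynomial.eval_mul, Polynomial.eval_sub, Polynomial.eval_C,
      Polynomial.eval_X, sub_self, zero_mul, mul_zero, zero_sub, neg_eq_zero] at hloc
    have : β / (x 1 - x 0) * ((x 1 - x 0) * (P 0 1).eval (x 0)) = 0 := hloc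
    have h4 : β / (x 1 - x 0) * ((x 1 - x 0) * (P 0 1).eval (x 0))
        = β * (P 0 1).eval (x 0) := by
      field_simp
    rw [h4] at this
    exact (mul_eq_zero.mp this).resolve_left (ne_of_gt hβ)
  -- S vanishes at x 0
  have hS0 : (∑ j ∈ Finset.range (n + 1), hatf x n j (x 0) * sfun x n P j (x 0)) = 0 := by
    rw [Sval hx hPcont (show 0 < n by omega) (le_refl _) (le_of_lt h01)]
    simp [Qi, hP0]
  refine ⟨⟨dshF x n P, dshF_memL2 x P (x 0) (x n),
    (dshF_integrable x n P).intervalIntegrable, ?_⟩, hS0⟩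
  have cum : ∀ i ≤ n, ∫ t in (x 0)..(x i), dshF x n P t
      = (∑ j ∈ Finset.range (n + 1), hatf x n j (x i) * sfun x n P j (x i))
        - (∑ j ∈ Finset.range (n + 1), hatf x n j (x 0) * sfun x n P j (x 0)) := by
    intro i hi
    induction i with
    | zero => simp
    | succ k ih =>
      have hkn : k < n := by omega
      rw [← intervalIntegral.integral_add_adjacent_intervals (b := x k)
        (dshF_integrable x n P).intervalIntegrable
        (dshF_integrable x n P).intervalIntegrable]
      rw [ih (by omega), elem_int hx P hkn (le_of_lt (hx k hkn)) (le_refl _)]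
      rw [Sval hx hPcont hkn (le_refl _) (le_of_lt (hx k hkn)),
        Sval hx hPcont hkn (le_of_lt (hx k hkn)) (le_refl _)]
      ring
  intro y hy
  simp only
  obtain ⟨i, hi, h1, h2⟩ := find_elem hx hn hy.1 hy.2
  have hsplit : ∫ t in (x 0)..y, dshF x n P t
      = (∫ t in (x 0)..(x i), dshF x n P t) + ∫ t in (x i)..y, dshF x n P t :=
    (intervalIntegral.integral_add_adjacent_intervals
      (dshF_integrable x n P).intervalIntegrable
      (dshF_integrable x n P).intervalIntegrable).symm
  rw [hsplit, cum i (le_of_lt hi), elem_int hx P hi h1 h2,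
    Sval hx hPcont hi h1 h2, Sval hx hPcont hi (le_refl _) (le_of_lt (hx i hi))]
  ring
end

section
/- (Elementwise orthogonality of the reconstruction residual) In the setting of the patchwise reconstruction with s_h = ∑_j ψ_j s_j on the mesh of Ω = (a,b), for every mesh element K and every polynomial v of degree ≤ k' on K, ∫_K (f - β s_h') v = 0. Consequently β s_h' = Π_{k'} f, the L²-orthogonal projection of f onto piecewise polynomials of degree k' on the mesh. -/
open MeasureTheory Set intervalIntegral

lemma deg_aux (k : ℕ) (p q : Polynomial ℝ) (hp : p.degree ≤ (k : WithBot ℕ))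
    (hq : q.degree ≤ 1) : (q * p.derivative).degree ≤ (k : WithBot ℕ) := by
  rcases eq_or_ne p.derivative 0 with h | h
  · simp [h]
  · have hd : p.derivative.degree < p.degree :=
      Polynomial.degree_derivative_lt (fun h0 => h (by simp [h0]))
    obtain ⟨m, hm⟩ : ∃ m : ℕ, p.derivative.degree = m :=
      ⟨p.derivative.natDegree, Polynomial.degree_eq_natDegree h⟩
    have hmk : (m : WithBot ℕ) < (k : WithBot ℕ) := hm ▸ lt_of_lt_of_le hd hp
    have hmk' : m < k := by exact_mod_cast hmk
    calc (q * p.derivative).degree ≤ q.degree + p.derivative.degree :=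
          Polynomial.degree_mul_le _ _
      _ ≤ 1 + (m : WithBot ℕ) := by rw [hm]; exact add_le_add hq le_rfl
      _ = ((1 + m : ℕ) : WithBot ℕ) := by push_cast; ring
      _ ≤ (k : WithBot ℕ) := Nat.cast_le.mpr (by omega)

/-- elementwise orthogonality of the reconstruction residual:
for every mesh element `K = (x i, x (i+1))` and every polynomial `q` of degree
`≤ k'`, `∫_K (f - β s_h') q = 0`; moreover `β s_h'` is a polynomial of degree
`≤ k'` on each element, so that `β s_h'` is the `L²`-orthogonal projection
`Π_{k'} f` of `f`. Here `s_h' = Dfun i + Dfun (i+1)` on element `i`. -/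
theorem reconstruction_elementwise_orthogonality (n k' : ℕ) (hn : 1 ≤ n)
    (x : ℕ → ℝ) (hx : ∀ i < n, x i < x (i + 1)) (β : ℝ) (hβ : 0 < β)
    (f uh : ℝ → ℝ)
    (hf : MemLp f 2 (volume.restrict (Ioo (x 0) (x n))))
    (hfint : ∀ i < n, IntervalIntegrable f volume (x i) (x (i + 1)))
    (huh : MemLp uh 2 (volume.restrict (Ioo (x 0) (x n))))
    (huhint : ∀ i < n, IntervalIntegrable uh volume (x i) (x (i + 1)))
    (P : ℕ → ℕ → Polynomial ℝ)
    (hPdeg : ∀ j i, (P j i).degree ≤ (k' : WithBot ℕ))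
    (hPcont : ∀ j, 0 < j → j < n → (P j 0).eval (x j) = (P j 1).eval (x j))
    (hortho : ∀ j ≤ n, j ≠ n →
      (∫ t in pl x j..x j,
          (f t * hatf x n j t + β * (1 / (x j - pl x j)) * uh t))
        + (∫ t in (x j)..(pr x n j),
            (f t * hatf x n j t + β * (-(1 / (pr x n j - x j))) * uh t)) = 0)
    (hlocal : ∀ j ≤ n, ∀ q₁ q₂ : Polynomial ℝ,
      q₁.degree ≤ (k' : WithBot ℕ) → q₂.degree ≤ (k' : WithBot ℕ) →
      (∫ t in pl x j..x j, β * Dfun x n P j t * q₁.eval t)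
        + (∫ t in (x j)..(pr x n j), β * Dfun x n P j t * q₂.eval t)
      = (∫ t in pl x j..x j,
          (f t * hatf x n j t + β * (1 / (x j - pl x j)) * uh t) * q₁.eval t)
        + ∫ t in (x j)..(pr x n j),
            (f t * hatf x n j t + β * (-(1 / (pr x n j - x j))) * uh t) * q₂.eval t) :
    ∀ i < n,
      (∀ q : Polynomial ℝ, q.degree ≤ (k' : WithBot ℕ) →
        (∫ t in (x i)..(x (i + 1)),
          (f t - β * (Dfun x n P i t + Dfun x n P (i + 1) t)) * q.eval t) = 0)
      ∧ ∃ rpol : Polynomial ℝ, rpol.degree ≤ (k' : WithBot ℕ) ∧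
          ∀ t ∈ Ioo (x i) (x (i + 1)),
            β * (Dfun x n P i t + Dfun x n P (i + 1) t) = rpol.eval t := by
  intro i hi
  have hi' : i ≤ n := hi.le
  have hi1 : i + 1 ≤ n := hi
  have hin : i ≠ n := Nat.ne_of_lt hi
  have hab : x i < x (i + 1) := hx i hi
  have hne : x (i + 1) - x i ≠ 0 := sub_ne_zero.mpr hab.ne'
  have hpr : pr x n i = x (i + 1) := by simp [pr, hin]
  have hpl : pl x (i + 1) = x i := by simp [pl]
  have hIoc : Set.uIoc (x i) (x (i + 1)) = Ioc (x i) (x (i + 1)) := uIoc_of_le hab.le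
  -- pointwise descriptions on the element
  have hD1 : ∀ t ∈ Ioc (x i) (x (i + 1)), Dfun x n P i t
      = -(1 / (x (i + 1) - x i)) * (P i 1).eval t
        + ((x (i + 1) - t) / (x (i + 1) - x i)) * (P i 1).derivative.eval t := by
    intro t ht
    simp only [Dfun, if_neg (not_le.2 ht.1), hpr]
  have hD2 : ∀ t ∈ Ioc (x i) (x (i + 1)), Dfun x n P (i + 1) t
      = (1 / (x (i + 1) - x i)) * (P (i + 1) 0).eval t
        + ((t - x i) / (x (i + 1) - x i)) * (P (i + 1) 0).derivative.eval t := by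
    intro t ht
    simp only [Dfun, if_pos ht.2, hpl]
  have hple : pl x i ≤ x i := by
    by_cases h0 : i = 0
    · simp [pl, h0]
    · have h1 : (i - 1) + 1 = i := Nat.succ_pred_eq_of_pos (Nat.pos_of_ne_zero h0)
      have h2 := (hx (i - 1) (by omega)).le
      rw [h1] at h2
      simpa [pl, h0] using h2
  have hhat1 : ∀ t ∈ Ioc (x i) (x (i + 1)),
      hatf x n i t = (x (i + 1) - t) / (x (i + 1) - x i) := by
    intro t ht
    rw [hatf, if_neg (not_lt.2 (hple.trans ht.1.le)), if_neg (not_le.2 ht.1),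
      if_pos (by rw [hpr]; exact ht.2), if_neg hin]
  have hhat2 : ∀ t ∈ Ioc (x i) (x (i + 1)),
      hatf x n (i + 1) t = (t - x i) / (x (i + 1) - x i) := by
    intro t ht
    rw [hatf, hpl, if_neg (not_lt.2 ht.1.le), if_pos ht.2, if_neg (Nat.succ_ne_zero i)]
    simp
  -- the polynomial equal to β * s_h' on the element
  set g1 : ℝ → ℝ := fun t => -(1 / (x (i + 1) - x i)) * (P i 1).eval t
    + ((x (i + 1) - t) / (x (i + 1) - x i)) * (P i 1).derivative.eval t with hg1
  set g2 : ℝ → ℝ := fun t => (1 / (x (i + 1) - x i)) * (P (i + 1) 0).eval t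
    + ((t - x i) / (x (i + 1) - x i)) * (P (i + 1) 0).derivative.eval t with hg2
  have hg1c : Continuous g1 := by
    apply Continuous.add
    · exact continuous_const.mul (P i 1).continuous
    · exact ((continuous_const.sub continuous_id).div_const _).mul
        (P i 1).derivative.continuous
  have hg2c : Continuous g2 := by
    apply Continuous.add
    · exact continuous_const.mul (P (i + 1) 0).continuous
    · exact ((continuous_id.sub continuous_const).div_const _).mul
        (P (i + 1) 0).derivative.continuous
  constructor
  · -- orthogonality
    intro q hq
    have hqc : ContinuousOn (fun t => q.eval t) (Set.uIcc (x i) (x (i + 1))) :=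
      q.continuous.continuousOn
    have hc1 : ContinuousOn (fun t => (x (i + 1) - t) / (x (i + 1) - x i))
        (Set.uIcc (x i) (x (i + 1))) :=
      (((continuous_const.sub continuous_id).div_const _)).continuousOn
    have hc2 : ContinuousOn (fun t => (t - x i) / (x (i + 1) - x i))
        (Set.uIcc (x i) (x (i + 1))) :=
      (((continuous_id.sub continuous_const).div_const _)).continuousOn
    have hfq : IntervalIntegrable (fun t => f t * q.eval t) volume (x i) (x (i + 1)) :=
      (hfint i hi).mul_continuousOn hqc
    have huq : IntervalIntegrable (fun t => uh t * q.eval t) volume (x i) (x (i + 1)) :=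
      (huhint i hi).mul_continuousOn hqc
    have hf1 : IntervalIntegrable
        (fun t => f t * ((x (i + 1) - t) / (x (i + 1) - x i)) * q.eval t)
        volume (x i) (x (i + 1)) :=
      ((hfint i hi).mul_continuousOn hc1).mul_continuousOn hqc
    have hf2 : IntervalIntegrable
        (fun t => f t * ((t - x i) / (x (i + 1) - x i)) * q.eval t)
        volume (x i) (x (i + 1)) :=
      ((hfint i hi).mul_continuousOn hc2).mul_continuousOn hqc
    have hg1q : IntervalIntegrable (fun t => β * g1 t * q.eval t)
        volume (x i) (x (i + 1)) :=
      ((continuous_const.mul hg1c).mul q.continuous).intervalIntegrable _ _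
    have hg2q : IntervalIntegrable (fun t => β * g2 t * q.eval t)
        volume (x i) (x (i + 1)) :=
      ((continuous_const.mul hg2c).mul q.continuous).intervalIntegrable _ _
    have key1 := hlocal i hi' 0 q (by simp) hq
    simp only [Polynomial.eval_zero, mul_zero, intervalIntegral.integral_zero, zero_add,
      hpr] at key1
    have key2 := hlocal (i + 1) hi1 q 0 hq (by simp)
    simp only [Polynomial.eval_zero, mul_zero, intervalIntegral.integral_zero, add_zero,
      hpl] at key2
    have e1 : (∫ t in (x i)..(x (i + 1)), β * Dfun x n P i t * q.eval t)
        = ∫ t in (x i)..(x (i + 1)), β * g1 t * q.eval t := by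
      refine intervalIntegral.integral_congr_ae (Filter.Eventually.of_forall ?_)
      intro t ht
      rw [hIoc] at ht
      rw [hD1 t ht]
    have e2 : (∫ t in (x i)..(x (i + 1)), β * Dfun x n P (i + 1) t * q.eval t)
        = ∫ t in (x i)..(x (i + 1)), β * g2 t * q.eval t := by
      refine intervalIntegral.integral_congr_ae (Filter.Eventually.of_forall ?_)
      intro t ht
      rw [hIoc] at ht
      rw [hD2 t ht]
    have e3 : (∫ t in (x i)..(x (i + 1)),
          (f t * hatf x n i t + β * -(1 / (x (i + 1) - x i)) * uh t) * q.eval t)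
        = ∫ t in (x i)..(x (i + 1)),
          (f t * ((x (i + 1) - t) / (x (i + 1) - x i))
            + β * -(1 / (x (i + 1) - x i)) * uh t) * q.eval t := by
      refine intervalIntegral.integral_congr_ae (Filter.Eventually.of_forall ?_)
      intro t ht
      rw [hIoc] at ht
      rw [hhat1 t ht]
    have e4 : (∫ t in (x i)..(x (i + 1)),
          (f t * hatf x n (i + 1) t + β * (1 / (x (i + 1) - x i)) * uh t) * q.eval t)
        = ∫ t in (x i)..(x (i + 1)),
          (f t * ((t - x i) / (x (i + 1) - x i))
            + β * (1 / (x (i + 1) - x i)) * uh t) * q.eval t := by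
      refine intervalIntegral.integral_congr_ae (Filter.Eventually.of_forall ?_)
      intro t ht
      rw [hIoc] at ht
      rw [hhat2 t ht]
    have v1 : (∫ t in (x i)..(x (i + 1)), β * g1 t * q.eval t)
        = (∫ t in (x i)..(x (i + 1)),
            f t * ((x (i + 1) - t) / (x (i + 1) - x i)) * q.eval t)
          + (β * -(1 / (x (i + 1) - x i)))
            * ∫ t in (x i)..(x (i + 1)), uh t * q.eval t := by
      rw [← e1, key1, e3]
      rw [show (fun t => (f t * ((x (i + 1) - t) / (x (i + 1) - x i))
            + β * -(1 / (x (i + 1) - x i)) * uh t) * q.eval t)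
          = fun t => f t * ((x (i + 1) - t) / (x (i + 1) - x i)) * q.eval t
            + (β * -(1 / (x (i + 1) - x i))) * (uh t * q.eval t)
        from funext fun t => by ring]
      rw [intervalIntegral.integral_add hf1 (huq.const_mul _),
        intervalIntegral.integral_const_mul]
    have v2 : (∫ t in (x i)..(x (i + 1)), β * g2 t * q.eval t)
        = (∫ t in (x i)..(x (i + 1)),
            f t * ((t - x i) / (x (i + 1) - x i)) * q.eval t)
          + (β * (1 / (x (i + 1) - x i)))
            * ∫ t in (x i)..(x (i + 1)), uh t * q.eval t := by
      rw [← e2, key2, e4]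
      rw [show (fun t => (f t * ((t - x i) / (x (i + 1) - x i))
            + β * (1 / (x (i + 1) - x i)) * uh t) * q.eval t)
          = fun t => f t * ((t - x i) / (x (i + 1) - x i)) * q.eval t
            + (β * (1 / (x (i + 1) - x i))) * (uh t * q.eval t)
        from funext fun t => by ring]
      rw [intervalIntegral.integral_add hf2 (huq.const_mul _),
        intervalIntegral.integral_const_mul]
    have vsum : (∫ t in (x i)..(x (i + 1)),
          f t * ((x (i + 1) - t) / (x (i + 1) - x i)) * q.eval t)
        + (∫ t in (x i)..(x (i + 1)),
          f t * ((t - x i) / (x (i + 1) - x i)) * q.eval t)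
        = ∫ t in (x i)..(x (i + 1)), f t * q.eval t := by
      rw [← intervalIntegral.integral_add hf1 hf2]
      apply intervalIntegral.integral_congr
      intro t _
      field_simp
      ring
    have esplit : (∫ t in (x i)..(x (i + 1)),
          (f t - β * (Dfun x n P i t + Dfun x n P (i + 1) t)) * q.eval t)
        = ∫ t in (x i)..(x (i + 1)),
          (f t * q.eval t - β * g1 t * q.eval t - β * g2 t * q.eval t) := by
      refine intervalIntegral.integral_congr_ae (Filter.Eventually.of_forall ?_)
      intro t ht
      rw [hIoc] at ht
      rw [hD1 t ht, hD2 t ht]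
      ring
    rw [esplit, intervalIntegral.integral_sub (hfq.sub hg1q) hg2q,
      intervalIntegral.integral_sub hfq hg1q, v1, v2]
    linear_combination -vsum
  · -- β s_h' is a polynomial of degree ≤ k' on the element
    refine ⟨Polynomial.C (β * -(1 / (x (i + 1) - x i))) * P i 1
      + Polynomial.C (β * (1 / (x (i + 1) - x i)))
        * ((Polynomial.C (x (i + 1)) - Polynomial.X) * (P i 1).derivative)
      + Polynomial.C (β * (1 / (x (i + 1) - x i))) * P (i + 1) 0
      + Polynomial.C (β * (1 / (x (i + 1) - x i)))
        * ((Polynomial.X - Polynomial.C (x i)) * (P (i + 1) 0).derivative), ?_, ?_⟩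
    · have hCb : (Polynomial.C (x (i + 1)) - Polynomial.X : Polynomial ℝ).degree ≤ 1 := by
        rw [show (Polynomial.C (x (i + 1)) - Polynomial.X : Polynomial ℝ)
            = -(Polynomial.X - Polynomial.C (x (i + 1))) by ring,
          Polynomial.degree_neg, Polynomial.degree_X_sub_C]
      have hCa : (Polynomial.X - Polynomial.C (x i) : Polynomial ℝ).degree ≤ 1 :=
        (Polynomial.degree_X_sub_C _).le
      have hCmul : ∀ (c : ℝ) (p : Polynomial ℝ), p.degree ≤ (k' : WithBot ℕ) →
          (Polynomial.C c * p).degree ≤ (k' : WithBot ℕ) := fun c p hp =>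
        le_trans (Polynomial.degree_mul_le _ _)
          (by simpa using add_le_add Polynomial.degree_C_le hp)
      refine le_trans (Polynomial.degree_add_le _ _) (max_le ?_ ?_)
      · refine le_trans (Polynomial.degree_add_le _ _) (max_le ?_ ?_)
        · refine le_trans (Polynomial.degree_add_le _ _) (max_le ?_ ?_)
          · exact hCmul _ _ (hPdeg i 1)
          · exact hCmul _ _ (deg_aux k' (P i 1) _ (hPdeg i 1) hCb)
        · exact hCmul _ _ (hPdeg (i + 1) 0)
      · exact hCmul _ _ (deg_aux k' (P (i + 1) 0) _ (hPdeg (i + 1) 0) hCa)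
    · intro t ht
      rw [hD1 t ⟨ht.1, ht.2.le⟩, hD2 t ⟨ht.1, ht.2.le⟩]
      simp only [Polynomial.eval_add, Polynomial.eval_mul, Polynomial.eval_sub,
        Polynomial.eval_C, Polynomial.eval_X]
      field_simp
      ring
end

section
/- (Inf–sup identity for the local problem) Let ω = (x₀,x₂) be a patch with interior vertex x₁, ψ the hat function of x₁, β ≠ 0 constant, and k' ≥ 0. For every continuous piecewise polynomial s of degree ≤ k' on the two subintervals of ω, sup over nonzero piecewise polynomials v of degree ≤ k' on ω of ( ∫_ω β(ψ s)' v ) / ‖v‖_{L²(ω)} = ‖β(ψ s)'‖_{L²(ω)}; i.e., the inf–sup constant of the local bilinear form equals 1. -/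
open MeasureTheory Set intervalIntegral
open scoped ENNReal

/-! ### Auxiliary material -/

/-- Piecewise polynomial function with breakpoint `b`. -/
noncomputable def PW (b : ℝ) (p₁ p₂ : Polynomial ℝ) (t : ℝ) : ℝ :=
  if t ≤ b then p₁.eval t else p₂.eval t

lemma PW_measurable (b : ℝ) (p₁ p₂ : Polynomial ℝ) : Measurable (PW b p₁ p₂) := by
  refine Measurable.ite (measurableSet_le measurable_id measurable_const) ?_ ?_
  · exact (Polynomial.continuous p₁).measurable
  · exact (Polynomial.continuous p₂).measurable

lemma PW_memLp (a b c : ℝ) (p₁ p₂ : Polynomial ℝ) :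
    MemLp (PW b p₁ p₂) 2 (volume.restrict (Ioo a c)) := by
  haveI : IsFiniteMeasure (volume.restrict (Ioo a c)) := by
    constructor
    rw [Measure.restrict_apply_univ]
    exact measure_Ioo_lt_top
  obtain ⟨C₁, hC₁⟩ := (isCompact_Icc (a := a) (b := c)).exists_bound_of_continuousOn
    (Polynomial.continuous p₁).continuousOn
  obtain ⟨C₂, hC₂⟩ := (isCompact_Icc (a := a) (b := c)).exists_bound_of_continuousOn
    (Polynomial.continuous p₂).continuousOn
  refine MemLp.of_bound ((PW_measurable b p₁ p₂).aestronglyMeasurable) (max C₁ C₂) ?_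
  filter_upwards [ae_restrict_mem measurableSet_Ioo] with t ht
  have ht' : t ∈ Icc a c := Ioo_subset_Icc_self ht
  unfold PW
  split
  · exact le_trans (hC₁ t ht') (le_max_left _ _)
  · exact le_trans (hC₂ t ht') (le_max_right _ _)

lemma poly_intOn_Ioc (p q : Polynomial ℝ) (a b : ℝ) :
    IntegrableOn (fun t => p.eval t * q.eval t) (Ioc a b) := by
  have h : (fun t : ℝ => p.eval t * q.eval t) = fun t => (p * q).eval t := by
    funext t; simp [Polynomial.eval_mul]
  rw [h]
  exact (Polynomial.continuous (p * q)).integrableOn_Ioc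

/-- Splitting the integrals of a product of piecewise polynomials. -/
lemma split_int (a b c : ℝ) (hab : a < b) (hbc : b < c) (p₁ p₂ q₁ q₂ : Polynomial ℝ) :
    ((∫ t in a..b, PW b p₁ p₂ t * q₁.eval t) + ∫ t in b..c, PW b p₁ p₂ t * q₂.eval t)
      = ∫ t in Ioo a c, PW b p₁ p₂ t * PW b q₁ q₂ t := by
  have e1 : (∫ t in a..b, PW b p₁ p₂ t * q₁.eval t)
      = ∫ t in Ioc a b, p₁.eval t * q₁.eval t := by
    rw [intervalIntegral.integral_of_le hab.le]
    refine setIntegral_congr_fun measurableSet_Ioc fun t ht => ?_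
    simp [PW, ht.2]
  have e2 : (∫ t in b..c, PW b p₁ p₂ t * q₂.eval t)
      = ∫ t in Ioo b c, p₂.eval t * q₂.eval t := by
    rw [intervalIntegral.integral_of_le hbc.le, integral_Ioc_eq_integral_Ioo]
    refine setIntegral_congr_fun measurableSet_Ioo fun t ht => ?_
    simp [PW, not_le.mpr ht.1]
  have e3 : Ioc a b ∪ Ioo b c = Ioo a c := Ioc_union_Ioo_eq_Ioo hab.le hbc
  have hdisj : Disjoint (Ioc a b) (Ioo b c) := by
    refine Set.disjoint_left.mpr fun t ht1 ht2 => ?_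
    exact absurd ht2.1 (not_lt.mpr ht1.2)
  have hi1 : IntegrableOn (fun t => PW b p₁ p₂ t * PW b q₁ q₂ t) (Ioc a b) := by
    refine (poly_intOn_Ioc p₁ q₁ a b).congr_fun (fun t ht => ?_) measurableSet_Ioc
    simp [PW, ht.2]
  have hi2 : IntegrableOn (fun t => PW b p₁ p₂ t * PW b q₁ q₂ t) (Ioo b c) := by
    refine ((poly_intOn_Ioc p₂ q₂ b c).mono_set Ioo_subset_Ioc_self).congr_fun
      (fun t ht => ?_) measurableSet_Ioo
    simp [PW, not_le.mpr ht.1]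
  have e4 : ∫ t in Ioo a c, PW b p₁ p₂ t * PW b q₁ q₂ t
      = (∫ t in Ioc a b, PW b p₁ p₂ t * PW b q₁ q₂ t)
        + ∫ t in Ioo b c, PW b p₁ p₂ t * PW b q₁ q₂ t := by
    rw [← e3, setIntegral_union hdisj measurableSet_Ioo hi1 hi2]
  have e5 : (∫ t in Ioc a b, PW b p₁ p₂ t * PW b q₁ q₂ t)
      = ∫ t in Ioc a b, p₁.eval t * q₁.eval t := by
    refine setIntegral_congr_fun measurableSet_Ioc fun t ht => ?_
    simp [PW, ht.2]
  have e6 : (∫ t in Ioo b c, PW b p₁ p₂ t * PW b q₁ q₂ t)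
      = ∫ t in Ioo b c, p₂.eval t * q₂.eval t := by
    refine setIntegral_congr_fun measurableSet_Ioo fun t ht => ?_
    simp [PW, not_le.mpr ht.1]
  rw [e1, e2, e4, e5, e6]

/-- Cauchy–Schwarz for the `L²` seminorm. -/
lemma cauchy_schwarz (μ : Measure ℝ) (f g : ℝ → ℝ) (hf : MemLp f 2 μ) (hg : MemLp g 2 μ) :
    ∫ x, f x * g x ∂μ ≤ (eLpNorm f 2 μ).toReal * (eLpNorm g 2 μ).toReal := by
  have hpq : Real.HolderConjugate 2 2 := Real.HolderConjugate.two_two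
  have h2 : ENNReal.ofReal (2 : ℝ) = 2 := by norm_num
  have hf' : MemLp f (ENNReal.ofReal (2:ℝ)) μ := by rwa [h2]
  have hg' : MemLp g (ENNReal.ofReal (2:ℝ)) μ := by rwa [h2]
  have key := integral_mul_norm_le_Lp_mul_Lq hpq hf' hg'
  have hnf : (eLpNorm f 2 μ).toReal = (∫ x, ‖f x‖ ^ (2:ℝ) ∂μ) ^ ((1:ℝ)/2) := by
    rw [hf.eLpNorm_eq_integral_rpow_norm two_ne_zero ENNReal.ofNat_ne_top]
    rw [ENNReal.toReal_ofReal (by positivity)]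
    norm_num
  have hng : (eLpNorm g 2 μ).toReal = (∫ x, ‖g x‖ ^ (2:ℝ) ∂μ) ^ ((1:ℝ)/2) := by
    rw [hg.eLpNorm_eq_integral_rpow_norm two_ne_zero ENNReal.ofNat_ne_top]
    rw [ENNReal.toReal_ofReal (by positivity)]
    norm_num
  calc ∫ x, f x * g x ∂μ ≤ ‖∫ x, f x * g x ∂μ‖ := le_abs_self _
    _ ≤ ∫ x, ‖f x * g x‖ ∂μ := norm_integral_le_integral_norm _
    _ = ∫ x, ‖f x‖ * ‖g x‖ ∂μ := by simp [abs_mul]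
    _ ≤ (∫ x, ‖f x‖ ^ (2:ℝ) ∂μ) ^ ((1:ℝ)/2) * (∫ x, ‖g x‖ ^ (2:ℝ) ∂μ) ^ ((1:ℝ)/2) := key
    _ = (eLpNorm f 2 μ).toReal * (eLpNorm g 2 μ).toReal := by rw [hnf, hng]

lemma cauchy_schwarz' (s : Set ℝ) (f g : ℝ → ℝ) (hf : MemLp f 2 (volume.restrict s))
    (hg : MemLp g 2 (volume.restrict s)) :
    ∫ x in s, f x * g x ≤ L2N f s * L2N g s := by
  unfold L2N
  exact cauchy_schwarz _ f g hf hg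

/-- The square of the `L²` norm is the integral of the square. -/
lemma L2N_sq (f : ℝ → ℝ) (s : Set ℝ) (hf : MemLp f 2 (volume.restrict s)) :
    (L2N f s) ^ 2 = ∫ t in s, f t ^ 2 := by
  unfold L2N
  rw [hf.eLpNorm_eq_integral_rpow_norm two_ne_zero ENNReal.ofNat_ne_top]
  rw [ENNReal.toReal_ofReal (by positivity)]
  have h1 : (fun t => ‖f t‖ ^ ((2:ℝ≥0∞).toReal)) = fun t => f t ^ 2 := by
    funext t
    rw [ENNReal.toReal_ofNat, Real.rpow_two, Real.norm_eq_abs, sq_abs]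
  rw [h1]
  rw [← Real.rpow_natCast ((∫ t in s, f t ^ 2) ^ (((2:ℝ≥0∞).toReal)⁻¹)) 2,
    ← Real.rpow_mul (by positivity)]
  norm_num

lemma natdeg_aux (q p : Polynomial ℝ) (hq : q.natDegree ≤ 1) :
    (q * p.derivative).natDegree ≤ p.natDegree := by
  rcases eq_or_ne p.derivative 0 with h | h
  · simp [h]
  · refine (Polynomial.natDegree_mul_le).trans ?_
    have h2 := Polynomial.natDegree_derivative_le p
    have h3 : 1 ≤ p.natDegree := by
      by_contra hcon
      push_neg at hcon
      have : p.natDegree = 0 := by omega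
      obtain ⟨x, rfl⟩ := Polynomial.natDegree_eq_zero.mp this
      simp at h
    omega

/-- inf–sup identity for the local problem: the supremum over
nonzero piecewise polynomial test functions `v` of degree `≤ k'` of
`(∫_ω β (ψ s)' v) / ‖v‖_{L²(ω)}` equals `‖β (ψ s)'‖_{L²(ω)}`. -/
theorem local_inf_sup_identity (x₀ x₁ x₂ β : ℝ) (h01 : x₀ < x₁) (h12 : x₁ < x₂)
    (hβ : β ≠ 0) (k' : ℕ) (s₁ s₂ : Polynomial ℝ)
    (hd1 : s₁.degree ≤ (k' : WithBot ℕ)) (hd2 : s₂.degree ≤ (k' : WithBot ℕ))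
    (hcont : s₁.eval x₁ = s₂.eval x₁) :
    IsLUB {r : ℝ | ∃ v₁ v₂ : Polynomial ℝ,
        v₁.degree ≤ (k' : WithBot ℕ) ∧ v₂.degree ≤ (k' : WithBot ℕ) ∧
        (v₁ ≠ 0 ∨ v₂ ≠ 0) ∧
        r = ((∫ t in x₀..x₁, Gfun x₀ x₁ x₂ β s₁ s₂ t * v₁.eval t)
              + ∫ t in x₁..x₂, Gfun x₀ x₁ x₂ β s₁ s₂ t * v₂.eval t) /
            L2N (fun t => if t ≤ x₁ then v₁.eval t else v₂.eval t) (Ioo x₀ x₂)}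
      (L2N (Gfun x₀ x₁ x₂ β s₁ s₂) (Ioo x₀ x₂)) := by
  have hc : (0:ℝ) < x₁ - x₀ := by linarith
  have hd : (0:ℝ) < x₂ - x₁ := by linarith
  set g₁ : Polynomial ℝ := Polynomial.C (β/(x₁-x₀)) *
      (s₁ + (Polynomial.X - Polynomial.C x₀) * s₁.derivative) with hg₁def
  set g₂ : Polynomial ℝ := Polynomial.C (β/(x₂-x₁)) *
      (-s₂ + (Polynomial.C x₂ - Polynomial.X) * s₂.derivative) with hg₂def
  -- the key pointwise identity
  have hGeq : Gfun x₀ x₁ x₂ β s₁ s₂ = PW x₁ g₁ g₂ := by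
    funext t
    unfold Gfun hat1 hat1D PW
    by_cases ht : t ≤ x₁
    · simp only [ht, if_true, hg₁def, Polynomial.eval_mul, Polynomial.eval_C,
        Polynomial.eval_add, Polynomial.eval_sub, Polynomial.eval_X]
      first
      | (field_simp; ring)
      | field_simp
    · simp only [ht, if_false, hg₂def, Polynomial.eval_mul, Polynomial.eval_C,
        Polynomial.eval_add, Polynomial.eval_neg, Polynomial.eval_sub, Polynomial.eval_X]
      first
      | (field_simp; ring)
      | field_simp
  -- degree bounds
  have hnd1 : s₁.natDegree ≤ k' := Polynomial.natDegree_le_iff_degree_le.mpr hd1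
  have hnd2 : s₂.natDegree ≤ k' := Polynomial.natDegree_le_iff_degree_le.mpr hd2
  have hdg₁ : g₁.degree ≤ (k' : WithBot ℕ) := by
    rw [← Polynomial.natDegree_le_iff_degree_le]
    refine (Polynomial.natDegree_C_mul_le _ _).trans ?_
    refine (Polynomial.natDegree_add_le _ _).trans (max_le hnd1 ?_)
    refine (natdeg_aux _ s₁ ?_).trans hnd1
    rw [Polynomial.natDegree_X_sub_C]
  have hdg₂ : g₂.degree ≤ (k' : WithBot ℕ) := by
    rw [← Polynomial.natDegree_le_iff_degree_le]
    refine (Polynomial.natDegree_C_mul_le _ _).trans ?_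
    refine (Polynomial.natDegree_add_le _ _).trans (max_le ?_ ?_)
    · rw [Polynomial.natDegree_neg]; exact hnd2
    · refine (natdeg_aux _ s₂ ?_).trans hnd2
      have h : Polynomial.C x₂ - Polynomial.X = -(Polynomial.X - Polynomial.C x₂) := by ring
      rw [h, Polynomial.natDegree_neg, Polynomial.natDegree_X_sub_C]
  set N := L2N (Gfun x₀ x₁ x₂ β s₁ s₂) (Ioo x₀ x₂) with hN
  have hGmem : MemLp (Gfun x₀ x₁ x₂ β s₁ s₂) 2 (volume.restrict (Ioo x₀ x₂)) := by
    rw [hGeq]; exact PW_memLp x₀ x₁ x₂ g₁ g₂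
  have hNnonneg : 0 ≤ N := ENNReal.toReal_nonneg
  -- upper bound
  have hub : ∀ r ∈ {r : ℝ | ∃ v₁ v₂ : Polynomial ℝ,
        v₁.degree ≤ (k' : WithBot ℕ) ∧ v₂.degree ≤ (k' : WithBot ℕ) ∧
        (v₁ ≠ 0 ∨ v₂ ≠ 0) ∧
        r = ((∫ t in x₀..x₁, Gfun x₀ x₁ x₂ β s₁ s₂ t * v₁.eval t)
              + ∫ t in x₁..x₂, Gfun x₀ x₁ x₂ β s₁ s₂ t * v₂.eval t) /
            L2N (fun t => if t ≤ x₁ then v₁.eval t else v₂.eval t) (Ioo x₀ x₂)}, r ≤ N := by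
    rintro r ⟨v₁, v₂, _, _, _, rfl⟩
    have hVeq : (fun t => if t ≤ x₁ then v₁.eval t else v₂.eval t) = PW x₁ v₁ v₂ := rfl
    rw [hVeq, hGeq]
    have hnum : ((∫ t in x₀..x₁, PW x₁ g₁ g₂ t * v₁.eval t)
        + ∫ t in x₁..x₂, PW x₁ g₁ g₂ t * v₂.eval t)
        = ∫ t in Ioo x₀ x₂, PW x₁ g₁ g₂ t * PW x₁ v₁ v₂ t :=
      split_int x₀ x₁ x₂ h01 h12 g₁ g₂ v₁ v₂
    rw [hnum]
    have hcs := cauchy_schwarz' (Ioo x₀ x₂) (PW x₁ g₁ g₂) (PW x₁ v₁ v₂)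
      (PW_memLp x₀ x₁ x₂ g₁ g₂) (PW_memLp x₀ x₁ x₂ v₁ v₂)
    have hNeq : N = L2N (PW x₁ g₁ g₂) (Ioo x₀ x₂) := by rw [hN, hGeq]
    have h0' : (0:ℝ) ≤ L2N (PW x₁ v₁ v₂) (Ioo x₀ x₂) := ENNReal.toReal_nonneg
    rcases eq_or_lt_of_le h0' with h0 | h0
    · rw [← h0, div_zero]
      exact hNnonneg
    · rw [div_le_iff₀ h0, hNeq]
      exact hcs
  refine IsGreatest.isLUB ⟨?_, hub⟩
  -- membership
  by_cases hz : g₁ = 0 ∧ g₂ = 0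
  · -- G is identically zero
    have hG0 : Gfun x₀ x₁ x₂ β s₁ s₂ = fun _ => (0:ℝ) := by
      rw [hGeq, hz.1, hz.2]
      funext t
      simp [PW]
    have hN0 : N = 0 := by
      rw [hN, hG0]
      simp [L2N, eLpNorm_zero']
    refine ⟨1, 1, ?_, ?_, Or.inl one_ne_zero, ?_⟩
    · exact Polynomial.degree_one_le.trans (by exact_mod_cast Nat.zero_le k')
    · exact Polynomial.degree_one_le.trans (by exact_mod_cast Nat.zero_le k')
    · rw [hG0, hN0]
      simp
  · rw [not_and_or] at hz
    refine ⟨g₁, g₂, hdg₁, hdg₂, hz, ?_⟩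
    have hVeq : (fun t => if t ≤ x₁ then g₁.eval t else g₂.eval t) = PW x₁ g₁ g₂ := rfl
    rw [hVeq]
    have hnum : ((∫ t in x₀..x₁, Gfun x₀ x₁ x₂ β s₁ s₂ t * g₁.eval t)
        + ∫ t in x₁..x₂, Gfun x₀ x₁ x₂ β s₁ s₂ t * g₂.eval t)
        = ∫ t in Ioo x₀ x₂, Gfun x₀ x₁ x₂ β s₁ s₂ t ^ 2 := by
      rw [hGeq, split_int x₀ x₁ x₂ h01 h12 g₁ g₂ g₁ g₂]
      refine setIntegral_congr_fun measurableSet_Ioo fun t _ => ?_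
      rw [sq]
    rw [hnum, ← L2N_sq _ _ hGmem, ← hGeq, ← hN]
    rcases eq_or_ne N 0 with h | h
    · rw [h]; simp
    · rw [sq, mul_div_assoc, div_self h, mul_one]
end
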